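/- arXiv:1809.10741 — 4 statements merged into one kernel-verified Lean document; each statement's English description precedes it below -/
import Mathlib

section
/- For every x₀ > 0, the equation tanh(x₀/z₀) = z₀/x₀ has a unique solution z₀ in the interval (0, ∞). -/
lemma my_tanh_strictMono : StrictMono Real.tanh := by
  intro a b hab
  rw [Real.tanh_eq_sinh_div_cosh, Real.tanh_eq_sinh_div_cosh,
    div_lt_div_iff₀ (Real.cosh_pos a) (Real.cosh_pos b), ← sub_neg]
  have : Real.sinh a * Real.cosh b - Real.sinh b * Real.cosh a = Real.sinh (a - b) := by
    rw [Real.sinh_sub]; ring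
  rw [this]
  exact Real.sinh_neg_iff.mpr (by linarith)

lemma my_tanh_lt_one (x : ℝ) : Real.tanh x < 1 := by
  rw [Real.tanh_eq_sinh_div_cosh, div_lt_one (Real.cosh_pos x)]
  exact Real.sinh_lt_cosh x

lemma my_tanh_pos {x : ℝ} (hx : 0 < x) : 0 < Real.tanh x := by
  rw [Real.tanh_eq_sinh_div_cosh]
  exact div_pos (Real.sinh_pos_iff.mpr hx) (Real.cosh_pos x)

lemma my_continuous_tanh : Continuous Real.tanh := by
  have : Real.tanh = fun x => Real.sinh x / Real.cosh x := by
    funext x; exact Real.tanh_eq_sinh_div_cosh x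
  rw [this]
  exact Real.continuous_sinh.div Real.continuous_cosh fun x => (Real.cosh_pos x).ne'

/-- For every `x₀ > 0`, the equation `tanh (x₀ / z₀) = z₀ / x₀` has a unique
solution `z₀ ∈ (0, ∞)`. -/
theorem stmt_1 (x₀ : ℝ) (hx : 0 < x₀) :
    ∃! z₀ : ℝ, z₀ ∈ Set.Ioi (0 : ℝ) ∧ Real.tanh (x₀ / z₀) = z₀ / x₀ := by
  set a : ℝ := x₀ * Real.tanh 1 / 2 with ha_def
  set b : ℝ := 2 * x₀ with hb_def
  have ht1 : 0 < Real.tanh 1 := my_tanh_pos one_pos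
  have ht1' : Real.tanh 1 < 1 := my_tanh_lt_one 1
  have ha : 0 < a := by positivity
  have hab : a < b := by
    rw [ha_def, hb_def]; nlinarith
  -- define h
  set h : ℝ → ℝ := fun z => Real.tanh (x₀ / z) - z / x₀ with hh
  have hcont : ContinuousOn h (Set.Icc a b) := by
    apply ContinuousOn.sub
    · exact my_continuous_tanh.comp_continuousOn
        (continuousOn_const.div continuousOn_id
          (fun z hz => (lt_of_lt_of_le ha hz.1).ne'))
    · exact (continuousOn_id.div continuousOn_const (fun z _ => hx.ne'))
  have hhb : h b < 0 := by
    have : Real.tanh (x₀ / b) < 1 := my_tanh_lt_one _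
    have hb2 : b / x₀ = 2 := by rw [hb_def]; field_simp
    simp only [hh]; rw [hb2]; linarith
  have hha : 0 < h a := by
    have h1a : 1 < x₀ / a := by
      rw [ha_def, lt_div_iff₀ (by positivity)]
      nlinarith
    have : Real.tanh 1 < Real.tanh (x₀ / a) := my_tanh_strictMono h1a
    have hax : a / x₀ = Real.tanh 1 / 2 := by
      rw [ha_def]; field_simp
    simp only [hh]; rw [hax]; linarith
  -- existence via IVT
  have : (0 : ℝ) ∈ Set.Icc (h b) (h a) := ⟨hhb.le, hha.le⟩
  obtain ⟨z, hz, hz0⟩ := intermediate_value_Icc' hab.le hcont this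
  have hzpos : 0 < z := lt_of_lt_of_le ha hz.1
  have heq : Real.tanh (x₀ / z) = z / x₀ := by
    have := hz0; simp only [hh] at this; linarith [sub_eq_zero.mp this]
  -- strict antitone for uniqueness
  have key : ∀ u v : ℝ, 0 < u → 0 < v → u < v →
      Real.tanh (x₀ / u) = u / x₀ → Real.tanh (x₀ / v) = v / x₀ → False := by
    intro u v hu hv huv h1 h2
    have : x₀ / v < x₀ / u := div_lt_div_of_pos_left hx hu huv
    have := my_tanh_strictMono this
    rw [h1, h2] at this
    have : v / x₀ < u / x₀ := this
    rw [div_lt_div_iff_of_pos_right hx] at this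
    linarith
  refine ⟨z, ⟨hzpos, heq⟩, ?_⟩
  rintro w ⟨hw, hweq⟩
  rcases lt_trichotomy w z with h' | h' | h'
  · exact absurd (key w z hw hzpos h' hweq heq) (fun x => x)
  · exact h'
  · exact absurd (key z w hzpos hw h' heq hweq) (fun x => x)
end

section
/- Let α > 0 and let f : [0, r] → (0, ∞) be a C² solution of f''(x)/(1 + f'(x)²) + f'(x)/x = α/f(x) on (0, r] with f(0) = z₀ > 0 and f'(0) = 0, and suppose f(x) > sqrt(α/2)·x for all x in (0, r]. Then f(x) < ((α+2)/α)·f(r) - sqrt(r² + 4f(r)²/α² - x²) for all 0 ≤ x < r. In particular f(0) < ((α+2)/α)·f(r) - sqrt(r² + 4f(r)²/α²). -/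
open Set Filter Real
open scoped Topology

set_option maxHeartbeats 1000000 in
/-- Height estimate for rotational α-singular minimal profiles: if `f` solves
`f''/(1+f'^2) + f'/x = α/f` on `(0,r]` with `f(0) = z₀ > 0`, `f'(0) = 0`, and
`f(x) > sqrt(α/2) x`, then `f(x) < ((α+2)/α) f(r) - sqrt(r² + 4 f(r)²/α² - x²)`
for `0 ≤ x < r`; in particular this bounds `f(0)`. -/
theorem stmt_6 (α r z₀ : ℝ) (hα : 0 < α) (hr : 0 < r) (hz : 0 < z₀)
    (f : ℝ → ℝ) (hf2 : ContDiffOn ℝ 2 f (Set.Icc 0 r))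
    (hpos : ∀ x ∈ Set.Icc 0 r, 0 < f x)
    (hode : ∀ x ∈ Set.Ioc 0 r,
      deriv (deriv f) x / (1 + (deriv f x) ^ 2) + deriv f x / x = α / f x)
    (hf0 : f 0 = z₀) (hf'0 : deriv f 0 = 0)
    (hcone : ∀ x ∈ Set.Ioc 0 r, Real.sqrt (α / 2) * x < f x) :
    (∀ x : ℝ, 0 ≤ x → x < r →
      f x < (α + 2) / α * f r - Real.sqrt (r ^ 2 + 4 * (f r) ^ 2 / α ^ 2 - x ^ 2)) ∧
    f 0 < (α + 2) / α * f r - Real.sqrt (r ^ 2 + 4 * (f r) ^ 2 / α ^ 2) := by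
  have hα' : α ≠ 0 := ne_of_gt hα
  set S : Set ℝ := Set.Ioo 0 r with hS
  have hSopen : IsOpen S := isOpen_Ioo
  have hSI : S ⊆ Set.Icc 0 r := Set.Ioo_subset_Icc_self
  have hfS : ContDiffOn ℝ 2 f S := hf2.mono hSI
  have hfcont : ContinuousOn f (Set.Icc 0 r) := hf2.continuousOn
  have hg1 : ContDiffOn ℝ 1 (deriv f) S := hfS.deriv_of_isOpen hSopen (by norm_num)
  have hgc : ContinuousOn (deriv f) S := hg1.continuousOn
  have hd1 : ∀ x ∈ S, HasDerivAt f (deriv f x) x := by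
    intro x hx
    exact ((hfS.differentiableOn (by norm_num)).differentiableAt
      (hSopen.mem_nhds hx)).hasDerivAt
  have hd2 : ∀ x ∈ S, HasDerivAt (deriv f) (deriv (deriv f) x) x := by
    intro x hx
    exact ((hg1.differentiableOn (by norm_num)).differentiableAt
      (hSopen.mem_nhds hx)).hasDerivAt
  -- ODE in product form
  have hode2 : ∀ x ∈ S, deriv (deriv f) x
      = (α / f x - deriv f x / x) * (1 + (deriv f x) ^ 2) := by
    intro x hx
    have hp : (0:ℝ) < 1 + (deriv f x) ^ 2 := by positivity
    have h := hode x ⟨hx.1, hx.2.le⟩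
    have h2 : deriv (deriv f) x / (1 + (deriv f x) ^ 2) = α / f x - deriv f x / x := by
      linarith
    exact (div_eq_iff hp.ne').1 h2
  -- derivative tends to 0 at 0+
  have hudo : UniqueDiffOn ℝ (Set.Icc (0:ℝ) r) := uniqueDiffOn_Icc hr
  have h0mem : (0:ℝ) ∈ Set.Icc (0:ℝ) r := ⟨le_refl 0, hr.le⟩
  have hF1 : ContinuousOn (derivWithin f (Set.Icc 0 r)) (Set.Icc 0 r) :=
    hf2.continuousOn_derivWithin hudo (by norm_num)
  have hF1' : ContDiffOn ℝ 1 (derivWithin f (Set.Icc 0 r)) (Set.Icc 0 r) :=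
    hf2.derivWithin hudo (by norm_num)
  have hF2 : ContinuousOn (derivWithin (derivWithin f (Set.Icc 0 r)) (Set.Icc 0 r))
      (Set.Icc 0 r) := hF1'.continuousOn_derivWithin hudo (by norm_num)
  have hF1eq : ∀ x ∈ S, derivWithin f (Set.Icc 0 r) x = deriv f x := by
    intro x hx
    exact derivWithin_of_mem_nhds (Icc_mem_nhds hx.1 hx.2)
  have hF2eq : ∀ x ∈ S, derivWithin (derivWithin f (Set.Icc 0 r)) (Set.Icc 0 r) x
      = deriv (deriv f) x := by
    intro x hx
    rw [derivWithin_of_mem_nhds (Icc_mem_nhds hx.1 hx.2)]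
    apply Filter.EventuallyEq.deriv_eq
    filter_upwards [hSopen.mem_nhds hx] with t ht
    exact hF1eq t ht
  have hnhds : 𝓝[S] (0:ℝ) = 𝓝[>] (0:ℝ) := nhdsWithin_Ioo_eq_nhdsGT hr
  have hSmem : S ∈ 𝓝[>] (0:ℝ) := by
    rw [← hnhds]; exact self_mem_nhdsWithin
  have t1 : Tendsto (deriv f) (𝓝[>] (0:ℝ)) (𝓝 (derivWithin f (Set.Icc 0 r) 0)) := by
    have h := (hF1 0 h0mem).mono hSI
    rw [ContinuousWithinAt] at h
    rw [hnhds] at h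
    refine h.congr' ?_
    filter_upwards [hSmem] with t ht
    exact hF1eq t ht
  have t2 : Tendsto (deriv (deriv f)) (𝓝[>] (0:ℝ))
      (𝓝 (derivWithin (derivWithin f (Set.Icc 0 r)) (Set.Icc 0 r) 0)) := by
    have h := (hF2 0 h0mem).mono hSI
    rw [ContinuousWithinAt] at h
    rw [hnhds] at h
    refine h.congr' ?_
    filter_upwards [hSmem] with t ht
    exact hF2eq t ht
  have t0 : Tendsto f (𝓝[>] (0:ℝ)) (𝓝 z₀) := by
    have h := (hfcont 0 h0mem).mono hSI
    rw [ContinuousWithinAt, hf0] at h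
    rwa [hnhds] at h
  have hd0 : Tendsto (deriv f) (𝓝[>] (0:ℝ)) (𝓝 0) := by
    set d := derivWithin f (Set.Icc 0 r) 0 with hdd
    set e := derivWithin (derivWithin f (Set.Icc 0 r)) (Set.Icc 0 r) 0 with hee
    have hq : Tendsto (fun x => deriv f x / x) (𝓝[>] (0:ℝ))
        (𝓝 (α / z₀ - e / (1 + d ^ 2))) := by
      have hrhs : Tendsto (fun x => α / f x - deriv (deriv f) x / (1 + (deriv f x) ^ 2))
          (𝓝[>] (0:ℝ)) (𝓝 (α / z₀ - e / (1 + d ^ 2))) := by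
        apply Tendsto.sub
        · exact (tendsto_const_nhds.div t0 hz.ne')
        · refine t2.div ?_ (by positivity)
          have : Tendsto (fun x => (deriv f x) ^ 2) (𝓝[>] (0:ℝ)) (𝓝 (d ^ 2)) := t1.pow 2
          simpa using (tendsto_const_nhds.add this)
      refine hrhs.congr' ?_
      filter_upwards [hSmem] with x hx
      have h := hode x ⟨hx.1, hx.2.le⟩
      linarith
    have hz' : Tendsto (fun x : ℝ => deriv f x / x * x) (𝓝[>] (0:ℝ)) (𝓝 0) := by
      have hx0 : Tendsto (fun x : ℝ => x) (𝓝[>] (0:ℝ)) (𝓝 0) :=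
        tendsto_id.mono_left nhdsWithin_le_nhds
      simpa using hq.mul hx0
    have heq : Tendsto (deriv f) (𝓝[>] (0:ℝ)) (𝓝 0) := by
      refine hz'.congr' ?_
      filter_upwards [self_mem_nhdsWithin] with x hx
      have : (x:ℝ) ≠ 0 := ne_of_gt hx
      field_simp
    exact heq
  -- The integrated lower bound lemma
  have key_int : ∀ b ∈ S, ∀ β : ℝ, (∀ t ∈ Set.Ioo (0:ℝ) b, β ≤ deriv (deriv f) t) →
      ∀ x ∈ Set.Ioc (0:ℝ) b, β * x ≤ deriv f x := by
    intro b hb β hβ x hx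
    have hxS : x ∈ S := ⟨hx.1, lt_of_le_of_lt hx.2 hb.2⟩
    have main : ∀ ε ∈ Set.Ioo (0:ℝ) x, deriv f ε + (β * x - β * ε) ≤ deriv f x := by
      intro ε hε
      have hsub : Set.Icc ε x ⊆ S := fun t ht =>
        ⟨lt_of_lt_of_le hε.1 ht.1, lt_of_le_of_lt (le_trans ht.2 hx.2) hb.2⟩
      have hmono : MonotoneOn (fun t => deriv f t - β * t) (Set.Icc ε x) := by
        apply monotoneOn_of_deriv_nonneg (convex_Icc ε x)
        · exact (hgc.mono hsub).sub ((continuous_const.mul continuous_id).continuousOn)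
        · intro t ht
          rw [interior_Icc] at ht
          have htS : t ∈ S := hsub ⟨ht.1.le, ht.2.le⟩
          exact (((hd2 t htS).sub ((hasDerivAt_id t).const_mul β)).differentiableAt
            ).differentiableWithinAt
        · intro t ht
          rw [interior_Icc] at ht
          have htS : t ∈ S := hsub ⟨ht.1.le, ht.2.le⟩
          have hder : HasDerivAt (fun t => deriv f t - β * t)
              (deriv (deriv f) t - β) t := by
            have h1 := (hd2 t htS).sub ((hasDerivAt_id t).const_mul β)
            simpa [mul_comm, Pi.sub_def] using h1
          rw [hder.deriv]
          have htIoo : t ∈ Set.Ioo (0:ℝ) b := ⟨lt_trans hε.1 ht.1,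
            lt_of_lt_of_le ht.2 hx.2⟩
          linarith [hβ t htIoo]
      have h := hmono (Set.left_mem_Icc.2 hε.2.le) (Set.right_mem_Icc.2 hε.2.le) hε.2.le
      simp only at h
      linarith
    have hev : ∀ᶠ ε in 𝓝[>] (0:ℝ), deriv f ε + (β * x - β * ε) ≤ deriv f x := by
      filter_upwards [Ioo_mem_nhdsGT_of_mem ⟨le_refl (0:ℝ), hx.1⟩] with ε hε
      exact main ε hε
    have hlim : Tendsto (fun ε : ℝ => deriv f ε + (β * x - β * ε)) (𝓝[>] (0:ℝ))
        (𝓝 (0 + (β * x - β * 0))) := by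
      apply hd0.add
      apply Tendsto.mono_left _ nhdsWithin_le_nhds
      exact (continuous_const.sub (continuous_const.mul continuous_id)).tendsto 0
    have := le_of_tendsto hlim hev
    simpa using this
  -- second derivative lower bound where L ≤ 0
  have hddf : ∀ t ∈ S, 2 * (f t * deriv f t) - α * t ≤ 0 →
      α / (2 * f t) ≤ deriv (deriv f) t := by
    intro t ht hLt
    have hft := hpos t (hSI ht)
    have h1 : deriv f t / t ≤ α / (2 * f t) := by
      rw [div_le_div_iff₀ ht.1 (by linarith : (0:ℝ) < 2 * f t)]
      nlinarith
    have h2 : α / (2 * f t) ≤ α / f t - deriv f t / t := by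
      have he : α / f t - α / (2 * f t) = α / (2 * f t) := by
        field_simp; ring
      linarith
    rw [hode2 t ht]
    have h3 : (0:ℝ) ≤ α / (2 * f t) := div_nonneg hα.le (by linarith)
    nlinarith [sq_nonneg (deriv f t), mul_nonneg (le_trans h3 h2) (sq_nonneg (deriv f t))]
  -- STAR: L cannot be ≤ 0 on all of (0, x₀]
  have star : ∀ x₀ ∈ S, ¬ (∀ t ∈ Set.Ioc (0:ℝ) x₀, 2 * (f t * deriv f t) - α * t ≤ 0) := by
    intro x₀ hx₀ hL
    have hx₀Icc : Set.Icc (0:ℝ) x₀ ⊆ Set.Icc 0 r :=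
      Set.Icc_subset_Icc le_rfl hx₀.2.le
    obtain ⟨tM, htM, hMmax⟩ := isCompact_Icc.exists_isMaxOn
      (Set.nonempty_Icc.2 hx₀.1.le) (hfcont.mono hx₀Icc)
    have hM0 : 0 < f tM := hpos tM (hx₀Icc htM)
    -- stage 1: f'' ≥ α/(2 M)
    have h1 : ∀ t ∈ Set.Ioo (0:ℝ) x₀, α / (2 * f tM) ≤ deriv (deriv f) t := by
      intro t ht
      have htS : t ∈ S := ⟨ht.1, lt_trans ht.2 hx₀.2⟩
      have hft := hpos t (hSI htS)
      have hle : f t ≤ f tM := hMmax ⟨ht.1.le, ht.2.le⟩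
      have := hddf t htS (hL t ⟨ht.1, ht.2.le⟩)
      have h2 : α / (2 * f tM) ≤ α / (2 * f t) :=
        div_le_div_of_nonneg_left hα.le (by linarith) (by linarith)
      linarith
    have h2 := key_int x₀ hx₀ _ h1
    have hmono : StrictMonoOn f (Set.Icc 0 x₀) := by
      apply strictMonoOn_of_deriv_pos (convex_Icc 0 x₀) (hfcont.mono hx₀Icc)
      intro t ht
      rw [interior_Icc] at ht
      have := h2 t ⟨ht.1, ht.2.le⟩
      have hb : 0 < α / (2 * f tM) * t := mul_pos (div_pos hα (by linarith)) ht.1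
      linarith
    have hfmax : ∀ t ∈ Set.Icc (0:ℝ) x₀, f t ≤ f x₀ := by
      intro t ht
      rcases eq_or_lt_of_le ht.2 with h | h
      · rw [h]
      · exact (hmono ht (Set.right_mem_Icc.2 hx₀.1.le) h).le
    have hfx₀ : 0 < f x₀ := hpos x₀ (hx₀Icc (Set.right_mem_Icc.2 hx₀.1.le))
    set t₁ := x₀ / 2 with ht₁def
    have ht₁x₀ : t₁ < x₀ := half_lt_self hx₀.1
    have ht₁pos : 0 < t₁ := half_pos hx₀.1
    have ht₁S : t₁ ∈ S := ⟨ht₁pos, lt_trans ht₁x₀ hx₀.2⟩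
    have hft₁pos : 0 < f t₁ := hpos t₁ (hSI ht₁S)
    have hft₁ : f t₁ < f x₀ :=
      hmono ⟨ht₁pos.le, ht₁x₀.le⟩ (Set.right_mem_Icc.2 hx₀.1.le) ht₁x₀
    -- stage 3: on (0, t₁]
    have h3 : ∀ t ∈ Set.Ioo (0:ℝ) t₁, α / (2 * f t₁) ≤ deriv (deriv f) t := by
      intro t ht
      have htS : t ∈ S := ⟨ht.1, lt_trans (lt_trans ht.2 ht₁x₀) hx₀.2⟩
      have hft := hpos t (hSI htS)
      have hle : f t ≤ f t₁ :=
        (hmono ⟨ht.1.le, (le_trans ht.2.le ht₁x₀.le)⟩ ⟨ht₁pos.le, ht₁x₀.le⟩ ht.2).le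
      have := hddf t htS (hL t ⟨ht.1, (le_trans ht.2.le ht₁x₀.le)⟩)
      have hgc2 : α / (2 * f t₁) ≤ α / (2 * f t) :=
        div_le_div_of_nonneg_left hα.le (by linarith) (by linarith)
      linarith
    have h4 := key_int t₁ ht₁S _ h3 t₁ (Set.right_mem_Ioc.2 ht₁pos)
    -- stage 4: monotone on [t₁, x₀] with β = α/(2 f x₀)
    set β := α / (2 * f x₀) with hβdef
    have hβ4 : ∀ t ∈ Set.Ioo t₁ x₀, β ≤ deriv (deriv f) t := by
      intro t ht
      have htS : t ∈ S := ⟨lt_trans ht₁pos ht.1, lt_trans ht.2 hx₀.2⟩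
      have hft := hpos t (hSI htS)
      have hle : f t ≤ f x₀ := hfmax t ⟨(lt_trans ht₁pos ht.1).le, ht.2.le⟩
      have := hddf t htS (hL t ⟨lt_trans ht₁pos ht.1, ht.2.le⟩)
      have hgc2 : β ≤ α / (2 * f t) := by
        rw [hβdef]
        exact div_le_div_of_nonneg_left hα.le (by linarith) (by linarith)
      linarith
    have hsub4 : Set.Icc t₁ x₀ ⊆ S := fun t ht =>
      ⟨lt_of_lt_of_le ht₁pos ht.1, lt_of_le_of_lt ht.2 hx₀.2⟩
    have hmono4 : MonotoneOn (fun t => deriv f t - β * t) (Set.Icc t₁ x₀) := by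
      apply monotoneOn_of_deriv_nonneg (convex_Icc t₁ x₀)
      · exact (hgc.mono hsub4).sub ((continuous_const.mul continuous_id).continuousOn)
      · intro t ht
        rw [interior_Icc] at ht
        have htS : t ∈ S := hsub4 ⟨ht.1.le, ht.2.le⟩
        exact (((hd2 t htS).sub ((hasDerivAt_id t).const_mul β)).differentiableAt
          ).differentiableWithinAt
      · intro t ht
        rw [interior_Icc] at ht
        have htS : t ∈ S := hsub4 ⟨ht.1.le, ht.2.le⟩
        have hder : HasDerivAt (fun t => deriv f t - β * t)
            (deriv (deriv f) t - β) t := by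
          have h1 := (hd2 t htS).sub ((hasDerivAt_id t).const_mul β)
          simpa [mul_comm, Pi.sub_def] using h1
        rw [hder.deriv]
        linarith [hβ4 t ht]
    have hstep := hmono4 (Set.left_mem_Icc.2 ht₁x₀.le) (Set.right_mem_Icc.2 ht₁x₀.le)
      ht₁x₀.le
    simp only at hstep
    -- β t₁ < (α/(2 f t₁)) t₁
    have hβlt : β * t₁ < α / (2 * f t₁) * t₁ := by
      have hlt : β < α / (2 * f t₁) := by
        rw [hβdef]
        exact div_lt_div_of_pos_left hα (by linarith) (by linarith)
      exact mul_lt_mul_of_pos_right hlt ht₁pos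
    have hfinal : β * x₀ < deriv f x₀ := by nlinarith [h4, hstep]
    have hLx₀ := hL x₀ (Set.right_mem_Ioc.2 hx₀.1)
    have : 2 * f x₀ * β = α := by rw [hβdef]; field_simp
    nlinarith
  -- main positivity: L > 0 on S
  have lpos : ∀ x ∈ S, 0 < 2 * (f x * deriv f x) - α * x := by
    intro x₀ hx₀
    by_contra hneg
    push_neg at hneg
    obtain ⟨x₁, hx₁, hLx₁⟩ := by
      have := star x₀ hx₀
      push_neg at this
      exact this
    have hx₁S : x₁ ∈ S := ⟨hx₁.1, lt_of_le_of_lt hx₁.2 hx₀.2⟩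
    have hx₁x₀ : x₁ < x₀ := by
      rcases eq_or_lt_of_le hx₁.2 with h | h
      · exfalso; rw [h] at hLx₁; linarith
      · exact h
    set L : ℝ → ℝ := fun t => 2 * (f t * deriv f t) - α * t with hLdef
    have hsub : Set.Icc x₁ x₀ ⊆ S := fun t ht =>
      ⟨lt_of_lt_of_le hx₁.1 ht.1, lt_of_le_of_lt ht.2 hx₀.2⟩
    have hLcont : ContinuousOn L (Set.Icc x₁ x₀) := by
      apply ContinuousOn.sub
      · exact continuousOn_const.mul (((hfcont.mono (hsub.trans hSI))).mul
          (hgc.mono hsub))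
      · exact (continuous_const.mul continuous_id).continuousOn
    set B := Set.Icc x₁ x₀ ∩ L ⁻¹' Set.Iic 0 with hBdef
    have hBclosed : IsClosed B :=
      hLcont.preimage_isClosed_of_isClosed isClosed_Icc isClosed_Iic
    have hBne : B.Nonempty := ⟨x₀, ⟨⟨hx₁x₀.le, le_refl _⟩, hneg⟩⟩
    have hBbdd : BddBelow B := ⟨x₁, fun y hy => hy.1.1⟩
    set s := sInf B with hsdef
    have hsB : s ∈ B := hBclosed.csInf_mem hBne hBbdd
    have hsIcc : s ∈ Set.Icc x₁ x₀ := hsB.1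
    have hLs : L s ≤ 0 := hsB.2
    have hx₁s : x₁ < s := by
      rcases eq_or_lt_of_le hsIcc.1 with h | h
      · exfalso
        have h2 : L x₁ ≤ 0 := by rw [h]; exact hLs
        simp only [hLdef] at h2
        linarith
      · exact h
    have hsS : s ∈ S := hsub hsIcc
    have hLpos_left : ∀ t ∈ Set.Ico x₁ s, 0 < L t := by
      intro t ht
      by_contra h
      push_neg at h
      have htB : t ∈ B := ⟨⟨ht.1, le_trans ht.2.le hsIcc.2⟩, h⟩
      exact absurd (csInf_le hBbdd htB) (not_le.2 ht.2)
    have hneBot : (𝓝[Set.Ico x₁ s] s).NeBot := by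
      rw [mem_closure_iff_nhdsWithin_neBot.symm]
      rw [closure_Ico (ne_of_lt hx₁s)]
      exact ⟨hx₁s.le, le_refl s⟩
    have hLs0 : L s = 0 := by
      refine le_antisymm hLs ?_
      have h1 : Tendsto L (𝓝[Set.Ico x₁ s] s) (𝓝 (L s)) :=
        (hLcont s hsIcc).mono (Set.Ico_subset_Icc_self.trans
          (Set.Icc_subset_Icc le_rfl hsIcc.2))
      refine ge_of_tendsto h1 ?_
      filter_upwards [self_mem_nhdsWithin] with t ht
      exact (hLpos_left t ht).le
    have hds : HasDerivAt L
        (2 * (deriv f s * deriv f s + f s * deriv (deriv f) s) - α) s := by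
      have h1 : HasDerivAt (fun t => f t * deriv f t)
          (deriv f s * deriv f s + f s * deriv (deriv f) s) s :=
        (hd1 s hsS).mul (hd2 s hsS)
      have h2 := h1.const_mul 2
      have h3 : HasDerivAt (fun t : ℝ => α * t) α s := by
        simpa [mul_comm] using (hasDerivAt_id s).const_mul α
      exact h2.sub h3
    set l := 2 * (deriv f s * deriv f s + f s * deriv (deriv f) s) - α with hldef
    have hfs : 0 < f s := hpos s (hSI hsS)
    have hl_pos : 0 < l := by
      have hfs' : 2 * (f s * deriv f s) = α * s := by
        have : L s = 0 := hLs0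
        simp only [hLdef] at this
        linarith
      have hf'pos : 0 < deriv f s := by nlinarith [hsS.1]
      have e1 : deriv f s / s = α / (2 * f s) := by
        have hs0 : (s:ℝ) ≠ 0 := ne_of_gt hsS.1
        have hf0' : f s ≠ 0 := ne_of_gt hfs
        field_simp
        linear_combination hfs'
      have hdd := hode2 s hsS
      have e2 : α / f s - deriv f s / s = α / (2 * f s) := by
        rw [e1]
        field_simp
        ring
      rw [e2] at hdd
      have e3 : f s * deriv (deriv f) s = α / 2 * (1 + (deriv f s) ^ 2) := by
        rw [hdd]
        field_simp
      have : l = (2 + α) * (deriv f s) ^ 2 := by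
        rw [hldef]
        nlinarith [e3]
      rw [this]
      positivity
    have hslope : l ≤ 0 := by
      have ht : Tendsto (slope L s) (𝓝[≠] s) (𝓝 l) :=
        hasDerivAt_iff_tendsto_slope.1 hds
      have ht2 : Tendsto (slope L s) (𝓝[Set.Ico x₁ s] s) (𝓝 l) :=
        ht.mono_left (nhdsWithin_mono s (fun t ht => ne_of_lt ht.2))
      refine le_of_tendsto ht2 ?_
      filter_upwards [self_mem_nhdsWithin] with t ht
      rw [slope_def_field]
      have hnum : 0 ≤ L t - L s := by
        rw [hLs0]; simpa using (hLpos_left t ht).le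
      have hden : t - s ≤ 0 := (sub_neg.2 ht.2).le
      exact div_nonpos_iff.2 (Or.inl ⟨hnum, hden⟩)
    linarith
  -- f is strictly increasing on [0, r]
  have hmonof : StrictMonoOn f (Set.Icc 0 r) := by
    apply strictMonoOn_of_deriv_pos (convex_Icc 0 r) hfcont
    intro x hx
    rw [interior_Icc] at hx
    have hL := lpos x hx
    have hfx := hpos x (hSI hx)
    nlinarith [hx.1]
  have hfr : 0 < f r := hpos r ⟨hr.le, le_refl r⟩
  have main : ∀ y : ℝ, 0 ≤ y → y < r →
      f y < (α + 2) / α * f r - Real.sqrt (r ^ 2 + 4 * (f r) ^ 2 / α ^ 2 - y ^ 2) := by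
    intro y hy0 hyr
    have hyIcc : y ∈ Set.Icc 0 r := ⟨hy0, hyr.le⟩
    have hfy : f y < f r := hmonof hyIcc ⟨hr.le, le_refl r⟩ hyr
    have hfy0 : 0 < f y := hpos y hyIcc
    set c := (α + 2) / α * f r with hcdef
    have hcfr : c - f r = 2 * f r / α := by
      rw [hcdef]; field_simp; ring
    set Φ : ℝ → ℝ :=
      fun t => (c - f t) ^ 2 + t ^ 2 - (r ^ 2 + 4 * (f r) ^ 2 / α ^ 2) with hΦdef
    have hΦr : Φ r = 0 := by
      simp only [hΦdef]
      rw [hcfr]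
      field_simp
      ring
    have hΦanti : StrictAntiOn Φ (Set.Icc 0 r) := by
      apply strictAntiOn_of_deriv_neg (convex_Icc 0 r)
      · rw [hΦdef]
        apply ContinuousOn.sub
        · exact ((continuousOn_const.sub hfcont).pow 2).add (continuous_pow 2).continuousOn
        · exact continuousOn_const
      · intro t ht
        rw [interior_Icc] at ht
        have htIcc : t ∈ Set.Icc 0 r := hSI ht
        have hft0 : 0 < f t := hpos t htIcc
        have hftr : f t < f r := hmonof htIcc ⟨hr.le, le_refl r⟩ ht.2
        have h1 : HasDerivAt (fun u => (c - f u) ^ 2)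
            ((2:ℕ) * (c - f t) ^ (2 - 1) * (0 - deriv f t)) t :=
          ((hasDerivAt_const t c).sub (hd1 t ht)).pow 2
        have h2 := hasDerivAt_pow 2 t
        have h3 := (h1.add h2).sub_const (r ^ 2 + 4 * (f r) ^ 2 / α ^ 2)
        have hΦd : HasDerivAt Φ
            ((2:ℕ) * (c - f t) ^ (2 - 1) * (0 - deriv f t) + (2:ℕ) * t ^ (2 - 1)) t := by
          rw [hΦdef]
          exact h3
        rw [hΦd.deriv]
        have hf't : α * t / (2 * f t) < deriv f t := by
          rw [div_lt_iff₀ (by linarith : (0:ℝ) < 2 * f t)]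
          nlinarith [lpos t ht]
        have hA : 2 * f r / α < c - f t := by linarith
        have hApos : (0:ℝ) < 2 * f r / α := by positivity
        have hBpos : (0:ℝ) < α * t / (2 * f t) :=
          div_pos (mul_pos hα ht.1) (by linarith)
        have hprod : 2 * f r / α * (α * t / (2 * f t)) < (c - f t) * deriv f t :=
          mul_lt_mul'' hA hf't hApos.le hBpos.le
        have hsimp : 2 * f r / α * (α * t / (2 * f t)) = t * (f r / f t) := by
          field_simp
        have htt : t < t * (f r / f t) := by
          have h5 : 1 < f r / f t := (one_lt_div hft0).2 hftr
          nlinarith [ht.1]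
        push_cast
        nlinarith [hprod, hsimp, htt]
    have hΦy : 0 < Φ y := by
      have h6 := hΦanti hyIcc ⟨hr.le, le_refl r⟩ hyr
      rwa [hΦr] at h6
    have hcy : 0 < c - f y := by
      have h1 : 2 * f r / α < c - f y := by linarith
      have h2 : (0:ℝ) < 2 * f r / α := by positivity
      linarith
    have hsq : r ^ 2 + 4 * (f r) ^ 2 / α ^ 2 - y ^ 2 < (c - f y) ^ 2 := by
      have h7 := hΦy
      simp only [hΦdef] at h7
      linarith
    have hsqrt : Real.sqrt (r ^ 2 + 4 * (f r) ^ 2 / α ^ 2 - y ^ 2) < c - f y :=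
      (Real.sqrt_lt' hcy).2 hsq
    linarith
  refine ⟨main, ?_⟩
  have h8 := main 0 le_rfl hr
  norm_num at h8
  exact h8
end

section
/- Let α ∈ (0, 1]. Every maximal solution f of f''(x)/(1 + f'(x)²) = α/f(x), f(0) = z₀ > 0, f'(0) = 0, is defined on all of ℝ. -/
open Real Set Filter intervalIntegral Topology

theorem cat_global (α z₀ : ℝ) (hα1 : 0 < α) (hα2 : α ≤ 1) (hz : 0 < z₀) :
    ∃ G F : ℝ → ℝ, G 0 = z₀ ∧ F 0 = 0 ∧ ∀ x : ℝ,
      0 < G x ∧ HasDerivAt G (F x) x ∧ HasDerivAt F (α * (1 + F x ^ 2) / G x) x := by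
  obtain ⟨β, hβdef⟩ : ∃ β : ℝ, β = 1/α - 1 := ⟨_, rfl⟩
  have hβ : 0 ≤ β := by
    have : 1 ≤ 1/α := one_le_one_div hα1 hα2
    linarith
  obtain ⟨c, hcdef⟩ : ∃ c : ℝ, c = z₀ / α := ⟨_, rfl⟩
  have hc : 0 < c := hcdef ▸ div_pos hz hα1
  have hcont : Continuous fun t : ℝ => Real.cosh t ^ β :=
    Real.continuous_cosh.rpow_const fun t => Or.inl (by positivity)
  have hone : ∀ t : ℝ, (1:ℝ) ≤ Real.cosh t ^ β := by
    intro t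
    calc (1:ℝ) = 1 ^ β := (Real.one_rpow β).symm
    _ ≤ Real.cosh t ^ β := Real.rpow_le_rpow zero_le_one (Real.one_le_cosh t) hβ
  set X : ℝ → ℝ := fun s => c * ∫ t in (0:ℝ)..s, Real.cosh t ^ β with hXdef
  have hX' : ∀ s, HasDerivAt X (c * Real.cosh s ^ β) s := by
    intro s
    refine HasDerivAt.const_mul c ?_
    exact intervalIntegral.integral_hasDerivAt_right (hcont.intervalIntegrable 0 s)
      (hcont.stronglyMeasurableAtFilter _ _) hcont.continuousAt
  have hXderivpos : ∀ s, 0 < c * Real.cosh s ^ β := fun s => by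
    have := hone s; nlinarith
  have hXmono : StrictMono X := by
    apply strictMono_of_deriv_pos
    intro s
    rw [(hX' s).deriv]
    exact hXderivpos s
  have hXodd : ∀ s, X (-s) = - X s := by
    intro s
    have h1 := intervalIntegral.integral_comp_neg (a := (0:ℝ)) (b := s)
      (fun t => Real.cosh t ^ β)
    simp only [Real.cosh_neg, neg_zero] at h1
    -- h1 : ∫ 0..s = ∫ (-s)..0
    have h2 : (∫ t in (0:ℝ)..(-s), Real.cosh t ^ β)
        = - ∫ t in (-s)..(0:ℝ), Real.cosh t ^ β := intervalIntegral.integral_symm (-s) 0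
    simp only [hXdef]
    rw [h2, ← h1]
    ring
  have hXlb : ∀ s : ℝ, 0 ≤ s → c * s ≤ X s := by
    intro s hs
    have hint : s ≤ ∫ t in (0:ℝ)..s, Real.cosh t ^ β := by
      have h1 : (∫ t in (0:ℝ)..s, (1:ℝ)) ≤ ∫ t in (0:ℝ)..s, Real.cosh t ^ β := by
        apply intervalIntegral.integral_mono_on hs (intervalIntegrable_const)
          (hcont.intervalIntegrable 0 s)
        intro t _; exact hone t
      simpa using h1
    calc c * s ≤ c * ∫ t in (0:ℝ)..s, Real.cosh t ^ β :=
          mul_le_mul_of_nonneg_left hint hc.le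
    _ = X s := rfl
  have hXcont : Continuous X := by
    rw [continuous_iff_continuousAt]
    exact fun s => (hX' s).continuousAt
  have hXtop : Tendsto X atTop atTop := by
    refine tendsto_atTop_mono' atTop
      (by filter_upwards [eventually_ge_atTop (0:ℝ)] with s hs using hXlb s hs) ?_
    exact Tendsto.const_mul_atTop hc tendsto_id
  have hXbot : Tendsto X atBot atBot := by
    have h2 : Tendsto (fun s => - X s) atTop atBot := tendsto_neg_atBot_iff.mpr hXtop
    have h3 : Tendsto (fun s : ℝ => -s) atBot atTop := tendsto_neg_atBot_atTop
    have h4 := h2.comp h3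
    have h5 : ∀ s : ℝ, ((fun s => - X s) ∘ fun s : ℝ => -s) s = X s := by
      intro s; simp [Function.comp, hXodd s]
    rwa [funext h5] at h4
  have hXsurj : Function.Surjective X := hXcont.surjective hXtop hXbot
  set E := StrictMono.orderIsoOfSurjective X hXmono hXsurj with hEdef
  set S : ℝ → ℝ := fun x => E.symm x with hSdef
  have hXS : ∀ x, X (S x) = x := fun x =>
    StrictMono.orderIsoOfSurjective_self_symm_apply X hXmono hXsurj x
  have hScont : Continuous S := (OrderIso.continuous E.symm)
  have hS' : ∀ x, HasDerivAt S ((c * Real.cosh (S x) ^ β)⁻¹) x := fun x =>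
    HasDerivAt.of_local_left_inverse hScont.continuousAt (hX' (S x))
      (hXderivpos (S x)).ne' (Eventually.of_forall hXS)
  have hS0 : S 0 = 0 := by
    have hX0 : X 0 = 0 := by simp [hXdef]
    exact hXmono.injective (by rw [hXS 0, hX0])
  refine ⟨fun x => z₀ * Real.cosh (S x) ^ (1/α), fun x => Real.sinh (S x), ?_, ?_, ?_⟩
  · simp [hS0, Real.cosh_zero, Real.one_rpow]
  · simp [hS0]
  intro x
  have hch : 0 < Real.cosh (S x) := Real.cosh_pos (S x)
  have hchne : Real.cosh (S x) ≠ 0 := hch.ne'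
  have hP : 0 < Real.cosh (S x) ^ (1/α : ℝ) := Real.rpow_pos_of_pos hch _
  have hQ : 0 < Real.cosh (S x) ^ β := Real.rpow_pos_of_pos hch _
  have hβpow : Real.cosh (S x) ^ β
      = Real.cosh (S x) ^ (1/α : ℝ) / Real.cosh (S x) := by
    rw [hβdef, Real.rpow_sub hch, Real.rpow_one]
  refine ⟨by positivity, ?_, ?_⟩
  · have h1 : HasDerivAt (fun y => Real.cosh (S y))
        (Real.sinh (S x) * (c * Real.cosh (S x) ^ β)⁻¹) x :=
      (Real.hasDerivAt_cosh (S x)).comp x (hS' x)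
    have h2 := (Real.hasDerivAt_rpow_const (x := Real.cosh (S x)) (p := 1/α)
      (Or.inl hchne)).comp x h1
    have h3 := h2.const_mul z₀
    refine h3.congr_deriv ?_
    rw [hcdef, hβpow]
    have h4 : Real.cosh (S x) ^ (1/α - 1 : ℝ)
        = Real.cosh (S x) ^ (1/α : ℝ) / Real.cosh (S x) := by
      rw [Real.rpow_sub hch, Real.rpow_one]
    rw [h4]
    field_simp
  · have h1 : HasDerivAt (fun y => Real.sinh (S y))
        (Real.cosh (S x) * (c * Real.cosh (S x) ^ β)⁻¹) x :=
      (Real.hasDerivAt_sinh (S x)).comp x (hS' x)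
    convert h1 using 1
    rw [hcdef, hβpow]
    have hcosh2 : 1 + Real.sinh (S x) ^ 2 = Real.cosh (S x) ^ 2 := by rw [Real.cosh_sq]; ring
    rw [hcosh2]
    field_simp

/-- Right-side representation: a pointwise catenary solution satisfies
`f y = z₀ + ∫₀^y f'` for `y > 0` in `s`. -/
theorem cat_right (α z₀ : ℝ) (hα1 : 0 < α) (hz : 0 < z₀) (f : ℝ → ℝ) (s : Set ℝ)
    (hopen : IsOpen s) (hconn : s.OrdConnected) (h0 : (0:ℝ) ∈ s)
    (hpos : ∀ x ∈ s, 0 < f x)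
    (heq : ∀ x ∈ s, deriv (deriv f) x / (1 + (deriv f x) ^ 2) = α / f x)
    (hf0 : f 0 = z₀) (hf'0 : deriv f 0 = 0) :
    ∀ y ∈ s, 0 < y → f y = z₀ + ∫ t in (0:ℝ)..y, deriv f t := by
  set F := deriv f with hFdef
  -- basic facts
  have hder : ∀ x ∈ s, deriv F x = α * (1 + F x ^ 2) / f x := by
    intro x hx
    have h1 : (1 : ℝ) + F x ^ 2 ≠ 0 := by positivity
    have h2 : f x ≠ 0 := (hpos x hx).ne'
    have h3 := heq x hx
    rw [div_eq_div_iff h1 h2] at h3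
    field_simp
    linarith [h3]
  have hderpos : ∀ x ∈ s, 0 < deriv F x := by
    intro x hx
    rw [hder x hx]
    have := hpos x hx
    positivity
  have hF' : ∀ x ∈ s, HasDerivAt F (α * (1 + F x ^ 2) / f x) x := by
    intro x hx
    have h1 : DifferentiableAt ℝ F x := differentiableAt_of_deriv_ne_zero (hderpos x hx).ne'
    have := h1.hasDerivAt
    rwa [hder x hx] at this
  have hFcont : ContinuousOn F s := fun x hx =>
    ((hF' x hx).continuousAt).continuousWithinAt
  have hFmono : StrictMonoOn F s := by
    apply strictMonoOn_of_deriv_pos (convex_iff_ordConnected.mpr hconn) hFcont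
    intro x hx
    rw [hopen.interior_eq] at hx
    exact hderpos x hx
  have hFsign : ∀ x ∈ s, 0 < x → 0 < F x := by
    intro x hx hx0
    have := hFmono h0 hx hx0
    rwa [hf'0] at this
  have hfd : ∀ x ∈ s, 0 < x → HasDerivAt f (F x) x := by
    intro x hx hx0
    exact (differentiableAt_of_deriv_ne_zero (hFsign x hx hx0).ne').hasDerivAt
  -- fundamental identity between positive points of s
  have hfi : ∀ x ∈ s, ∀ y ∈ s, 0 < x → 0 < y →
      (∫ t in x..y, F t) = f y - f x := by
    intro x hx y hy hx0 hy0
    have huIcc : uIcc x y ⊆ s := hconn.uIcc_subset hx hy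
    have huIcc0 : ∀ t ∈ uIcc x y, 0 < t := by
      intro t ht
      have := ht.1
      rcases le_total x y with h | h <;> simp [uIcc_of_le, uIcc_of_ge, h] at ht <;>
        cases' ht with h1 h2
      · exact lt_of_lt_of_le hx0 h1
      · exact lt_of_lt_of_le hy0 h1
    exact intervalIntegral.integral_eq_sub_of_hasDerivAt
      (fun t ht => hfd t (huIcc ht) (huIcc0 t ht))
      ((hFcont.mono huIcc).intervalIntegrable)
  -- pick x₁ > 0 with Icc 0 x₁ ⊆ s
  obtain ⟨ε, hε, hball⟩ := Metric.isOpen_iff.mp hopen 0 h0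
  set x₁ := ε / 2 with hx₁def
  have hx₁pos : 0 < x₁ := by positivity
  have hx₁s : x₁ ∈ s := by
    apply hball
    simp [Real.ball_eq_Ioo, hx₁def]
    constructor <;> linarith
  have hIcc : Icc (0:ℝ) x₁ ⊆ s := hconn.out h0 hx₁s
  have hFcont1 : ContinuousOn F (Icc 0 x₁) := hFcont.mono hIcc
  -- integrability facts
  have hint : ∀ y ∈ Icc (0:ℝ) x₁, IntervalIntegrable F MeasureTheory.volume 0 y := by
    intro y hy
    apply ContinuousOn.intervalIntegrable
    apply hFcont1.mono
    rw [uIcc_of_le hy.1]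
    exact Icc_subset_Icc le_rfl hy.2
  -- the right limit L of f at 0
  obtain ⟨L, hLdef⟩ : ∃ L : ℝ, L = f x₁ - ∫ t in (0:ℝ)..x₁, F t := ⟨_, rfl⟩
  have hrep : ∀ y ∈ Ioc (0:ℝ) x₁, f y = L + ∫ t in (0:ℝ)..y, F t := by
    intro y hy
    have hys : y ∈ s := hIcc ⟨hy.1.le, hy.2⟩
    have h1 : (∫ t in (0:ℝ)..y, F t) + (∫ t in y..x₁, F t) = ∫ t in (0:ℝ)..x₁, F t := by
      apply intervalIntegral.integral_add_adjacent_intervals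
      · exact hint y ⟨hy.1.le, hy.2⟩
      · apply ContinuousOn.intervalIntegrable
        apply hFcont1.mono
        rw [uIcc_of_le hy.2]
        exact Icc_subset_Icc hy.1.le le_rfl
    have h2 := hfi y hys x₁ hx₁s hy.1 hx₁pos
    rw [hLdef]
    linarith [h1, h2]
  -- P is the primitive of F
  set P : ℝ → ℝ := fun y => ∫ t in (0:ℝ)..y, F t with hPdef
  have hP' : ∀ x ∈ s, HasDerivAt P (F x) x := by
    intro x hx
    apply intervalIntegral.integral_hasDerivAt_right
    · apply ContinuousOn.intervalIntegrable
      exact hFcont.mono (hconn.uIcc_subset h0 hx)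
    · exact hFcont.stronglyMeasurableAtFilter hopen x hx
    · exact (hF' x hx).continuousAt
  have hPtend : Tendsto P (𝓝[>] (0:ℝ)) (𝓝 0) := by
    have := ((hP' 0 h0).continuousAt).continuousWithinAt (s := Ioi (0:ℝ))
    have hP0 : P 0 = 0 := by simp [hPdef]
    rw [ContinuousWithinAt, hP0] at this
    exact this
  have hftend : Tendsto f (𝓝[>] (0:ℝ)) (𝓝 L) := by
    have h1 : Tendsto (fun y => L + P y) (𝓝[>] (0:ℝ)) (𝓝 (L + 0)) :=
      (tendsto_const_nhds.add hPtend)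
    rw [add_zero] at h1
    apply h1.congr'
    filter_upwards [Ioo_mem_nhdsGT hx₁pos] with y hy
    exact (hrep y ⟨hy.1, hy.2.le⟩).symm
  have hFtend : Tendsto F (𝓝[>] (0:ℝ)) (𝓝 0) := by
    have := ((hF' 0 h0).continuousAt).continuousWithinAt (s := Ioi (0:ℝ))
    rwa [ContinuousWithinAt, hf'0] at this
  -- slope of F at 0 tends to α / z₀
  have hslope : Tendsto (fun y => F y / y) (𝓝[>] (0:ℝ)) (𝓝 (α / z₀)) := by
    have h0' := hF' 0 h0
    have hval : α * (1 + F 0 ^ 2) / f 0 = α / z₀ := by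
      rw [hf'0, hf0]; norm_num
    rw [hval] at h0'
    have h1 := hasDerivAt_iff_tendsto_slope.mp h0'
    have h2 : Tendsto (slope F 0) (𝓝[>] (0:ℝ)) (𝓝 (α / z₀)) :=
      h1.mono_left (nhdsWithin_mono 0 (fun y hy => ne_of_gt hy))
    apply h2.congr
    intro y
    rw [slope_def_field, hf'0]
    ring
  have hQ1 : Tendsto (fun y => y / F y) (𝓝[>] (0:ℝ)) (𝓝 (z₀ / α)) := by
    have h1 := hslope.inv₀ (by positivity)
    have h2 : (α / z₀)⁻¹ = z₀ / α := by rw [inv_div]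
    rw [h2] at h1
    apply h1.congr
    intro y
    rw [inv_div]
  -- the auxiliary function h
  set H : ℝ → ℝ := fun t => f t / (α * (1 + F t ^ 2)) with hHdef
  have hHtend : Tendsto H (𝓝[>] (0:ℝ)) (𝓝 (L / α)) := by
    have h1 : Tendsto (fun t => α * (1 + F t ^ 2)) (𝓝[>] (0:ℝ)) (𝓝 (α * (1 + 0 ^ 2))) := by
      apply Tendsto.const_mul
      apply Tendsto.const_add
      exact hFtend.pow 2
    have h2 := hftend.div h1 (by norm_num; positivity)
    norm_num at h2
    exact h2
  -- via MVT, y / F y = H ξ for some ξ ∈ (0, y); so y / F y → L / α as well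
  have hQ2 : Tendsto (fun y => y / F y) (𝓝[>] (0:ℝ)) (𝓝 (L / α)) := by
    rw [tendsto_def]
    intro U hU
    have hU' := hHtend hU
    rw [mem_map] at hU'
    rw [mem_nhdsGT_iff_exists_Ioo_subset] at hU' ⊢
    obtain ⟨δ, hδ, hsub⟩ := hU'
    refine ⟨min δ x₁, by simp only [mem_Ioi, lt_min_iff]; exact ⟨hδ, hx₁pos⟩, ?_⟩
    intro y hy
    have hy0 : 0 < y := hy.1
    have hyx₁ : y ≤ x₁ := le_of_lt (lt_of_lt_of_le hy.2 (min_le_right δ x₁))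
    have hyδ : y < δ := lt_of_lt_of_le hy.2 (min_le_left δ x₁)
    have hys : y ∈ s := hIcc ⟨hy0.le, hyx₁⟩
    -- MVT
    obtain ⟨ξ, hξmem, hξ⟩ := exists_hasDerivAt_eq_slope F
      (fun t => α * (1 + F t ^ 2) / f t) hy0
      (hFcont.mono (fun t ht => hIcc ⟨ht.1, le_trans ht.2 hyx₁⟩))
      (fun t ht => hF' t (hIcc ⟨ht.1.le, le_trans ht.2.le hyx₁⟩))
    have hξs : ξ ∈ s := hIcc ⟨hξmem.1.le, le_trans hξmem.2.le hyx₁⟩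
    have hfξ : 0 < f ξ := hpos ξ hξs
    have hFy : 0 < F y := hFsign y hys hy0
    rw [hf'0, sub_zero, sub_zero] at hξ
    -- hξ : α * (1 + F ξ ^ 2) / f ξ = F y / y
    have key : y / F y = H ξ := by
      have h6 := (div_eq_div_iff hfξ.ne' hy0.ne').mp hξ
      show y / F y = f ξ / (α * (1 + F ξ ^ 2))
      rw [div_eq_div_iff hFy.ne' (by positivity : (α * (1 + F ξ ^ 2)) ≠ 0)]
      linarith [h6]
    rw [mem_preimage, key]
    exact hsub ⟨hξmem.1, lt_trans hξmem.2 hyδ⟩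
  -- uniqueness of limits: L = z₀
  have hLz : L = z₀ := by
    have := tendsto_nhds_unique hQ1 hQ2
    field_simp at this
    linarith
  intro y hy hy0
  rcases le_or_gt y x₁ with h | h
  · rw [← hLz]
    exact hrep y ⟨hy0, h⟩
  · have h1 : (∫ t in (0:ℝ)..x₁, F t) + (∫ t in x₁..y, F t) = ∫ t in (0:ℝ)..y, F t := by
      apply intervalIntegral.integral_add_adjacent_intervals
      · exact hint x₁ ⟨hx₁pos.le, le_rfl⟩
      · exact (hFcont.mono (hconn.uIcc_subset hx₁s hy)).intervalIntegrable
    have h2 := hfi x₁ hx₁s y hy hx₁pos hy0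
    have h3 := hrep x₁ ⟨hx₁pos, le_rfl⟩
    rw [← hLz]
    linarith

/-- Full regularity: a pointwise catenary solution is a genuine C² solution. -/
theorem cat_reg (α z₀ : ℝ) (hα1 : 0 < α) (hz : 0 < z₀) (f : ℝ → ℝ) (s : Set ℝ)
    (hopen : IsOpen s) (hconn : s.OrdConnected) (h0 : (0:ℝ) ∈ s)
    (hpos : ∀ x ∈ s, 0 < f x)
    (heq : ∀ x ∈ s, deriv (deriv f) x / (1 + (deriv f x) ^ 2) = α / f x)
    (hf0 : f 0 = z₀) (hf'0 : deriv f 0 = 0) :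
    ∀ x ∈ s, HasDerivAt f (deriv f x) x ∧
      HasDerivAt (deriv f) (α * (1 + (deriv f x) ^ 2) / f x) x := by
  have hder : ∀ x ∈ s, deriv (deriv f) x = α * (1 + (deriv f x) ^ 2) / f x := by
    intro x hx
    have h1 : (1 : ℝ) + (deriv f x) ^ 2 ≠ 0 := by positivity
    have h2 : f x ≠ 0 := (hpos x hx).ne'
    have h3 := heq x hx
    rw [div_eq_div_iff h1 h2] at h3
    field_simp
    linarith [h3]
  have hderpos : ∀ x ∈ s, 0 < deriv (deriv f) x := by
    intro x hx
    rw [hder x hx]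
    have := hpos x hx
    positivity
  have hF' : ∀ x ∈ s, HasDerivAt (deriv f) (α * (1 + (deriv f x) ^ 2) / f x) x := by
    intro x hx
    have h1 : DifferentiableAt ℝ (deriv f) x :=
      differentiableAt_of_deriv_ne_zero (hderpos x hx).ne'
    have := h1.hasDerivAt
    rwa [hder x hx] at this
  have hFcont : ContinuousOn (deriv f) s := fun x hx =>
    ((hF' x hx).continuousAt).continuousWithinAt
  -- reflected function
  set g : ℝ → ℝ := fun t => f (-t) with hgdef
  set s' : Set ℝ := Neg.neg ⁻¹' s with hs'def
  have hopen' : IsOpen s' := hopen.preimage continuous_neg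
  have hconn' : s'.OrdConnected := by
    constructor
    intro x hx y hy z hz
    have : -z ∈ Icc (-y) (-x) := ⟨by simpa using hz.2, by simpa using hz.1⟩
    exact hconn.out hy hx this
  have h0' : (0:ℝ) ∈ s' := by simpa [hs'def] using h0
  have hg' : deriv g = fun x => -(deriv f (-x)) := funext fun x => deriv_comp_neg f x
  have hg'' : ∀ x, deriv (deriv g) x = deriv (deriv f) (-x) := by
    intro x
    rw [hg']
    have h1 : deriv (fun x : ℝ => -(deriv f (-x))) x
        = - deriv (fun x : ℝ => deriv f (-x)) x := deriv.neg
    rw [h1, deriv_comp_neg, neg_neg]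
  have heq' : ∀ y ∈ s', deriv (deriv g) y / (1 + (deriv g y) ^ 2) = α / g y := by
    intro y hy
    have h1 : deriv g y = -(deriv f (-y)) := by rw [hg']
    rw [hg'' y, h1, neg_sq]
    exact heq (-y) hy
  have hg0 : g 0 = z₀ := by
    show f (-0) = z₀
    rw [neg_zero, hf0]
  have hg'0 : deriv g 0 = 0 := by
    rw [hg']
    show -(deriv f (-0)) = 0
    rw [neg_zero, hf'0, neg_zero]
  have hgright := cat_right α z₀ hα1 hz g s' hopen' hconn' h0'
    (fun y hy => hpos (-y) hy) heq' hg0 hg'0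
  have hrep_all : ∀ x ∈ s, f x = z₀ + ∫ t in (0:ℝ)..x, deriv f t := by
    intro x hx
    rcases lt_trichotomy 0 x with hx0 | hx0 | hx0
    · exact cat_right α z₀ hα1 hz f s hopen hconn h0 hpos heq hf0 hf'0 x hx hx0
    · rw [← hx0]
      simp [hf0]
    · have hy' : (-x) ∈ s' := by
        show -(-x) ∈ s
        rwa [neg_neg]
      have hkey := hgright (-x) hy' (by linarith)
      have e0 : g (-x) = f x := by
        show f (-(-x)) = f x
        rw [neg_neg]
      have e1 : (∫ t in (0:ℝ)..(-x), deriv g t)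
          = ∫ t in (0:ℝ)..(-x), -(deriv f (-t)) := by
        apply intervalIntegral.integral_congr
        intro t _
        rw [hg']
      have e2 : (∫ t in (0:ℝ)..(-x), -(deriv f (-t)))
          = - ∫ t in (0:ℝ)..(-x), deriv f (-t) := intervalIntegral.integral_neg
      have e3 : (∫ t in (0:ℝ)..(-x), deriv f (-t))
          = ∫ t in x..(0:ℝ), deriv f t := by
        have := intervalIntegral.integral_comp_neg (a := (0:ℝ)) (b := -x)
          (fun t => deriv f t)
        simp only [neg_neg, neg_zero] at this
        exact this
      have e4 : (∫ t in x..(0:ℝ), deriv f t)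
          = - ∫ t in (0:ℝ)..x, deriv f t := intervalIntegral.integral_symm 0 x
      rw [e0, e1, e2, e3, e4] at hkey
      linarith [hkey]
  -- conclusion via the primitive
  intro x hx
  refine ⟨?_, hF' x hx⟩
  have hP' : HasDerivAt (fun y => z₀ + ∫ t in (0:ℝ)..y, deriv f t) (deriv f x) x := by
    apply HasDerivAt.const_add
    apply intervalIntegral.integral_hasDerivAt_right
    · exact (hFcont.mono (hconn.uIcc_subset h0 hx)).intervalIntegrable
    · exact hFcont.stronglyMeasurableAtFilter hopen x hx
    · exact (hF' x hx).continuousAt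
  apply hP'.congr_of_eventuallyEq
  filter_upwards [hopen.mem_nhds hx] with y hy
  exact hrep_all y hy

theorem cat_lip (α ρ R : ℝ) (hα1 : 0 < α) (hα2 : α ≤ 1) (hρ : 0 < ρ) (hR : 0 ≤ R) :
    ∃ K : NNReal, LipschitzOnWith K (fun p : ℝ × ℝ => (p.2, α * (1 + p.2 ^ 2) / p.1))
      {p : ℝ × ℝ | ρ ≤ p.1 ∧ |p.2| ≤ R} := by
  set C : ℝ := 1 + 2 * R / ρ + (1 + R ^ 2) / ρ ^ 2 with hCdef
  have hC0 : 0 ≤ C := by positivity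
  refine ⟨Real.toNNReal C, LipschitzOnWith.of_dist_le_mul ?_⟩
  intro p hp q hq
  obtain ⟨hp1, hp2⟩ := hp
  obtain ⟨hq1, hq2⟩ := hq
  have hp1' : 0 < p.1 := lt_of_lt_of_le hρ hp1
  have hq1' : 0 < q.1 := lt_of_lt_of_le hρ hq1
  have hKC : (Real.toNNReal C : ℝ) = C := Real.coe_toNNReal C hC0
  have hD1 : |p.1 - q.1| ≤ dist p q := by
    rw [Prod.dist_eq, Real.dist_eq]
    exact le_max_left _ _
  have hD2 : |p.2 - q.2| ≤ dist p q := by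
    rw [Prod.dist_eq, Real.dist_eq]
    exact le_max_right _ _
  have hDnn : 0 ≤ dist p q := dist_nonneg
  rw [Prod.dist_eq]
  rw [max_le_iff]
  constructor
  · rw [Real.dist_eq, hKC]
    calc |p.2 - q.2| ≤ dist p q := hD2
    _ = 1 * dist p q := (one_mul _).symm
    _ ≤ C * dist p q := by
        apply mul_le_mul_of_nonneg_right _ hDnn
        have h : 0 ≤ 2 * R / ρ + (1 + R ^ 2) / ρ ^ 2 := by positivity
        rw [hCdef]; linarith
  · rw [Real.dist_eq, hKC]
    have key : α * (1 + p.2 ^ 2) / p.1 - α * (1 + q.2 ^ 2) / q.1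
        = (α * (p.2 + q.2) / p.1) * (p.2 - q.2)
          + (α * (1 + q.2 ^ 2) / (p.1 * q.1)) * (q.1 - p.1) := by
      field_simp
      ring
    have hb1 : |α * (p.2 + q.2) / p.1| ≤ 2 * R / ρ := by
      rw [abs_div, abs_mul, abs_of_pos hα1, abs_of_pos hp1']
      apply div_le_div₀ (by positivity)
      · have h1 : |p.2 + q.2| ≤ 2 * R := by
          calc |p.2 + q.2| ≤ |p.2| + |q.2| := abs_add_le _ _
          _ ≤ 2 * R := by linarith
        calc α * |p.2 + q.2| ≤ 1 * |p.2 + q.2| :=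
              mul_le_mul_of_nonneg_right hα2 (abs_nonneg _)
        _ = |p.2 + q.2| := one_mul _
        _ ≤ 2 * R := h1
      · exact hρ
      · exact hp1
    have hb2 : |α * (1 + q.2 ^ 2) / (p.1 * q.1)| ≤ (1 + R ^ 2) / ρ ^ 2 := by
      rw [abs_div, abs_mul, abs_of_pos hα1, abs_of_pos (mul_pos hp1' hq1'),
        abs_of_pos (by positivity : (0:ℝ) < 1 + q.2 ^ 2)]
      apply div_le_div₀ (by positivity)
      · have h1 : q.2 ^ 2 ≤ R ^ 2 := by
          rw [← sq_abs]
          exact pow_le_pow_left₀ (abs_nonneg _) hq2 2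
        nlinarith
      · positivity
      · calc ρ ^ 2 = ρ * ρ := sq ρ
        _ ≤ p.1 * q.1 := mul_le_mul hp1 hq1 hρ.le (by positivity)
    calc |α * (1 + p.2 ^ 2) / p.1 - α * (1 + q.2 ^ 2) / q.1|
        ≤ |α * (p.2 + q.2) / p.1| * |p.2 - q.2|
          + |α * (1 + q.2 ^ 2) / (p.1 * q.1)| * |q.1 - p.1| := by
          rw [key]
          calc _ ≤ |(α * (p.2 + q.2) / p.1) * (p.2 - q.2)|
              + |(α * (1 + q.2 ^ 2) / (p.1 * q.1)) * (q.1 - p.1)| := abs_add_le _ _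
          _ = _ := by rw [abs_mul, abs_mul]
    _ ≤ (2 * R / ρ) * dist p q + ((1 + R ^ 2) / ρ ^ 2) * dist p q := by
          apply add_le_add
          · exact mul_le_mul hb1 hD2 (abs_nonneg _) (by positivity)
          · have : |q.1 - p.1| ≤ dist p q := by rwa [abs_sub_comm]
            exact mul_le_mul hb2 this (abs_nonneg _) (by positivity)
    _ ≤ C * dist p q := by rw [hCdef]; nlinarith

def CatSolOn (α z₀ : ℝ) (f : ℝ → ℝ) (s : Set ℝ) : Prop :=
  (0 : ℝ) ∈ s ∧
  (∀ x ∈ s, 0 < f x ∧ deriv (deriv f) x / (1 + (deriv f x) ^ 2) = α / f x) ∧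
  f 0 = z₀ ∧ deriv f 0 = 0

/-- For `0 < α ≤ 1`, every maximal solution of the `α`-catenary ODE with
`f(0) = z₀ > 0`, `f'(0) = 0` is defined on all of `ℝ`: if `f` solves the ODE on
the interval `(a,b)` (with `a,b` extended reals, `a < 0 < b`) and is maximal —
no solution on a larger interval agrees with it — then `a = -∞` and `b = +∞`. -/
theorem stmt_18 (α z₀ : ℝ) (hα1 : 0 < α) (hα2 : α ≤ 1) (hz : 0 < z₀)
    (a b : EReal) (ha : a < 0) (hb : 0 < b) (f : ℝ → ℝ)
    (hsol : CatSolOn α z₀ f {x : ℝ | a < (x : EReal) ∧ (x : EReal) < b})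
    (hmax : ∀ (a' b' : EReal) (g : ℝ → ℝ), a' ≤ a → b ≤ b' →
      CatSolOn α z₀ g {x : ℝ | a' < (x : EReal) ∧ (x : EReal) < b'} →
      Set.EqOn g f {x : ℝ | a < (x : EReal) ∧ (x : EReal) < b} →
      a' = a ∧ b' = b) :
    a = ⊥ ∧ b = ⊤ := by
  obtain ⟨h0s, hODE, hf0, hf'0⟩ := hsol
  set s : Set ℝ := {x : ℝ | a < (x : EReal) ∧ (x : EReal) < b} with hsdef
  have hopen : IsOpen s := by
    have h1 : s = (fun x : ℝ => (x : EReal)) ⁻¹' (Set.Ioo a b) := rfl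
    rw [h1]
    exact isOpen_Ioo.preimage continuous_coe_real_ereal
  have hconn : s.OrdConnected := by
    constructor
    intro x hx y hy z hz
    exact ⟨lt_of_lt_of_le hx.1 (EReal.coe_le_coe_iff.mpr hz.1),
      lt_of_le_of_lt (EReal.coe_le_coe_iff.mpr hz.2) hy.2⟩
  obtain ⟨G, F, hG0, hF0, hGmain⟩ := cat_global α z₀ hα1 hα2 hz
  have hGpos : ∀ x, 0 < G x := fun x => (hGmain x).1
  have hGderiv : ∀ x, deriv G x = F x := fun x => (hGmain x).2.1.deriv
  have hGderivF : deriv G = F := funext hGderiv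
  have hG2 : ∀ x, deriv (deriv G) x = α * (1 + F x ^ 2) / G x := by
    intro x
    rw [hGderivF]
    exact (hGmain x).2.2.deriv
  -- G is a catenary solution on all of ℝ
  have hGsol : CatSolOn α z₀ G {x : ℝ | (⊥ : EReal) < (x : EReal) ∧ (x : EReal) < (⊤ : EReal)} := by
    refine ⟨⟨EReal.bot_lt_coe 0, EReal.coe_lt_top 0⟩, ?_, by rw [hG0], by rw [hGderivF, hF0]⟩
    intro x _
    refine ⟨hGpos x, ?_⟩
    rw [hG2 x, hGderivF]
    have h1 : (1 : ℝ) + F x ^ 2 ≠ 0 := by positivity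
    have h2 : G x ≠ 0 := (hGpos x).ne'
    field_simp
  -- f is a genuine solution on s
  have hreg := cat_reg α z₀ hα1 hz f s hopen hconn h0s
    (fun x hx => (hODE x hx).1) (fun x hx => (hODE x hx).2) hf0 hf'0
  -- G agrees with f on s
  have heqon : Set.EqOn G f s := by
    intro x hx
    -- find a compact interval inside s whose interior contains 0 and x
    obtain ⟨ε₁, hε₁, hball₁⟩ := Metric.isOpen_iff.mp hopen (min 0 x)
      (by rcases min_choice 0 x with h | h <;> rw [h] <;> [exact h0s; exact hx])
    obtain ⟨ε₂, hε₂, hball₂⟩ := Metric.isOpen_iff.mp hopen (max 0 x)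
      (by rcases max_choice 0 x with h | h <;> rw [h] <;> [exact h0s; exact hx])
    set a' : ℝ := min 0 x - ε₁ / 2 with ha'def
    set b' : ℝ := max 0 x + ε₂ / 2 with hb'def
    have ha's : a' ∈ s := by
      apply hball₁
      rw [Metric.mem_ball, Real.dist_eq]
      rw [ha'def]
      rw [abs_of_nonpos (by linarith)]
      linarith
    have hb's : b' ∈ s := by
      apply hball₂
      rw [Metric.mem_ball, Real.dist_eq]
      rw [hb'def]
      rw [abs_of_nonneg (by linarith)]
      linarith
    have hIcc : Icc a' b' ⊆ s := hconn.out ha's hb's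
    have hab' : a' < b' := by
      have h1 : min 0 x ≤ max 0 x := min_le_max
      rw [ha'def, hb'def]; linarith
    have h0mem : (0:ℝ) ∈ Ioo a' b' := by
      constructor
      · rw [ha'def]; have := min_le_left 0 x; linarith
      · rw [hb'def]; have := le_max_left 0 x; linarith
    have hxmem : x ∈ Ioo a' b' := by
      constructor
      · rw [ha'def]; have := min_le_right 0 x; linarith
      · rw [hb'def]; have := le_max_right 0 x; linarith
    -- continuity on the compact interval
    have hcomp : IsCompact (Icc a' b') := isCompact_Icc
    have hne : (Icc a' b').Nonempty := ⟨a', by constructor <;> [exact le_rfl; exact hab'.le]⟩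
    have hfc : ContinuousOn f (Icc a' b') := fun t ht =>
      ((hreg t (hIcc ht)).1.continuousAt).continuousWithinAt
    have hf'c : ContinuousOn (deriv f) (Icc a' b') := fun t ht =>
      ((hreg t (hIcc ht)).2.continuousAt).continuousWithinAt
    have hGc : ContinuousOn G (Icc a' b') := fun t _ =>
      ((hGmain t).2.1.continuousAt).continuousWithinAt
    have hFc : ContinuousOn F (Icc a' b') := fun t _ =>
      ((hGmain t).2.2.continuousAt).continuousWithinAt
    -- lower bound for f and G
    obtain ⟨t₁, ht₁, hmin₁⟩ := hcomp.exists_isMinOn hne hfc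
    obtain ⟨t₂, ht₂, hmin₂⟩ := hcomp.exists_isMinOn hne hGc
    obtain ⟨t₃, ht₃, hmax₃⟩ := hcomp.exists_isMaxOn hne (hf'c.abs)
    obtain ⟨t₄, ht₄, hmax₄⟩ := hcomp.exists_isMaxOn hne (hFc.abs)
    set ρ : ℝ := min (f t₁) (G t₂) with hρdef
    have hρpos : 0 < ρ := lt_min ((hODE t₁ (hIcc ht₁)).1) (hGpos t₂)
    set R : ℝ := max (|deriv f t₃|) (|F t₄|) with hRdef
    have hRnn : 0 ≤ R := le_trans (abs_nonneg _) (le_max_left _ _)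
    obtain ⟨K, hK⟩ := cat_lip α ρ R hα1 hα2 hρpos hRnn
    -- apply uniqueness of ODE solutions
    have huniq := ODE_solution_unique_of_mem_Ioo (v := fun _ p => (p.2, α * (1 + p.2 ^ 2) / p.1))
      (s := fun _ => {p : ℝ × ℝ | ρ ≤ p.1 ∧ |p.2| ≤ R}) (K := K)
      (fun _ _ => hK) (t₀ := 0) (a := a') (b := b')
      (f := fun t => (G t, F t)) (g := fun t => (f t, deriv f t)) h0mem
      ?_ ?_ ?_
    · have := huniq hxmem
      exact congrArg Prod.fst this
    · intro t ht
      constructor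
      · exact ((hGmain t).2.1).prodMk ((hGmain t).2.2)
      · constructor
        · exact min_le_right _ _ |>.trans (hmin₂ (Ioo_subset_Icc_self ht))
        · exact le_trans (hmax₄ (Ioo_subset_Icc_self ht)) (le_max_right _ _)
    · intro t ht
      have hts : t ∈ s := hIcc (Ioo_subset_Icc_self ht)
      constructor
      · exact ((hreg t hts).1).prodMk ((hreg t hts).2)
      · constructor
        · exact min_le_left _ _ |>.trans (hmin₁ (Ioo_subset_Icc_self ht))
        · exact le_trans (hmax₃ (Ioo_subset_Icc_self ht)) (le_max_left _ _)
    · show (G 0, F 0) = (f 0, deriv f 0)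
      rw [hG0, hF0, hf0, hf'0]
  have := hmax ⊥ ⊤ G bot_le le_top hGsol heqon
  exact ⟨this.1.symm, this.2.symm⟩
end

section
/- Let α > 1 and let f : (−R, R) → (0, ∞) be the maximal solution of f''(x)/(1 + f'(x)²) = α/f(x), f(0) = z₀ > 0, f'(0) = 0. Then R < ∞ and f(x) → ∞ as x → R⁻. Moreover, for λ > 0, the rescaled function f_λ(x) = λ f(x/λ) is the maximal solution with f_λ(0) = λz₀, so the maximal half-width R(z₀) satisfies R(λz₀) = λR(z₀); in particular R(z₀) → 0 as z₀ → 0 and R(z₀) → ∞ as z₀ → ∞. -/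
/-- `f` is a positive solution of the `α`-catenary ODE `f''/(1+f'^2) = α/f` on
`(-R,R)` with `f 0 = z₀` and `f' 0 = 0`. -/
def CatSol (α z₀ R : ℝ) (f : ℝ → ℝ) : Prop :=
  0 < R ∧
  (∀ x ∈ Set.Ioo (-R) R, 0 < f x ∧
    deriv (deriv f) x / (1 + (deriv f x) ^ 2) = α / f x) ∧
  f 0 = z₀ ∧ deriv f 0 = 0

/-- `f` is a maximal solution: it solves on `(-R,R)` and no solution on a
strictly larger symmetric interval extends it. -/
def MaximalCatSol (α z₀ R : ℝ) (f : ℝ → ℝ) : Prop :=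
  CatSol α z₀ R f ∧
  ∀ (R' : ℝ) (g : ℝ → ℝ), R < R' → CatSol α z₀ R' g →
    ¬ Set.EqOn g f (Set.Ioo (-R) R)

open Set Filter Real Topology

/-! ### Unconditional derivative transformation lemmas -/

lemma differentiableAt_comp_const_mul' {u : ℝ → ℝ} {c x : ℝ} (hc : c ≠ 0) :
    DifferentiableAt ℝ (fun y => u (c * y)) x ↔ DifferentiableAt ℝ u (c * x) := by
  constructor
  · intro h
    have hx : DifferentiableAt ℝ (fun y : ℝ => c⁻¹ * y) (c * x) :=
      (differentiable_id.const_mul _).differentiableAt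
    have h' : DifferentiableAt ℝ (fun y => u (c * y)) (c⁻¹ * (c * x)) := by
      rwa [inv_mul_cancel_left₀ hc]
    have h2 := h'.comp (c * x) hx
    have : (fun y => (fun y => u (c * y)) (c⁻¹ * y)) = u := by
      funext y; simp [mul_inv_cancel_left₀ hc]
    simpa [Function.comp_def, this] using h2
  · intro h
    exact h.comp x (differentiable_id.const_mul _).differentiableAt

lemma deriv_comp_const_mul' (u : ℝ → ℝ) {c : ℝ} (hc : c ≠ 0) (x : ℝ) :
    deriv (fun y => u (c * y)) x = c * deriv u (c * x) := by
  by_cases h : DifferentiableAt ℝ u (c * x)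
  · have h1 : HasDerivAt (fun y : ℝ => c * y) c x := by
      simpa using (hasDerivAt_id x).const_mul c
    have h2 : HasDerivAt (fun y => u (c * y)) (deriv u (c * x) * c) x := by
      simpa [Function.comp_def] using (h.hasDerivAt.comp x h1)
    rw [h2.deriv, mul_comm]
  · rw [deriv_zero_of_not_differentiableAt h,
      deriv_zero_of_not_differentiableAt ((differentiableAt_comp_const_mul' hc).not.2 h),
      mul_zero]

/-- scaled function: unconditional first derivative -/
lemma deriv_scale (u : ℝ → ℝ) {lam : ℝ} (hl : lam ≠ 0) (x : ℝ) :
    deriv (fun y => lam * u (y / lam)) x = deriv u (x / lam) := by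
  have h : (fun y => lam * u (y / lam)) = fun y => lam * (fun z => u (lam⁻¹ * z)) y := by
    funext y; rw [div_eq_inv_mul]
  rw [h, deriv_const_mul_field, deriv_comp_const_mul' u (inv_ne_zero hl), div_eq_inv_mul]
  field_simp

lemma deriv_scale' (u : ℝ → ℝ) {lam : ℝ} (hl : lam ≠ 0) (x : ℝ) :
    deriv (fun y => u (y / lam)) x = lam⁻¹ * deriv u (x / lam) := by
  have h : (fun y => u (y / lam)) = fun y => u (lam⁻¹ * y) := by
    funext y; rw [div_eq_inv_mul]
  rw [h, deriv_comp_const_mul' u (inv_ne_zero hl), div_eq_inv_mul]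


/-! ### Basic regularity -/

section Reg

variable {α z₀ R : ℝ} {f : ℝ → ℝ}

lemma CatSol.pos (hcs : CatSol α z₀ R f) {x : ℝ} (hx : x ∈ Ioo (-R) R) : 0 < f x :=
  (hcs.2.1 x hx).1

lemma CatSol.zero_mem (hcs : CatSol α z₀ R f) : (0:ℝ) ∈ Ioo (-R) R :=
  ⟨neg_lt_zero.2 hcs.1, hcs.1⟩

lemma CatSol.deriv2_eq (hα : 0 < α) (hcs : CatSol α z₀ R f) {x : ℝ} (hx : x ∈ Ioo (-R) R) :
    deriv (deriv f) x = α * (1 + (deriv f x) ^ 2) / f x := by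
  have h := (hcs.2.1 x hx).2
  have h1 : (0:ℝ) < 1 + (deriv f x) ^ 2 := by positivity
  field_simp at h ⊢
  linarith [h]

lemma CatSol.deriv2_pos (hα : 0 < α) (hcs : CatSol α z₀ R f) {x : ℝ}
    (hx : x ∈ Ioo (-R) R) : 0 < deriv (deriv f) x := by
  rw [hcs.deriv2_eq hα hx]
  have := hcs.pos hx
  positivity

lemma CatSol.diff_deriv (hα : 0 < α) (hcs : CatSol α z₀ R f) {x : ℝ}
    (hx : x ∈ Ioo (-R) R) : DifferentiableAt ℝ (deriv f) x := by
  by_contra h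
  have := hcs.deriv2_pos hα hx
  rw [deriv_zero_of_not_differentiableAt h] at this
  exact lt_irrefl _ this

lemma CatSol.hasDerivAt_deriv (hα : 0 < α) (hcs : CatSol α z₀ R f) {x : ℝ}
    (hx : x ∈ Ioo (-R) R) :
    HasDerivAt (deriv f) (α * (1 + (deriv f x) ^ 2) / f x) x := by
  have := (hcs.diff_deriv hα hx).hasDerivAt
  rwa [hcs.deriv2_eq hα hx] at this

lemma CatSol.contOn_deriv (hα : 0 < α) (hcs : CatSol α z₀ R f) :
    ContinuousOn (deriv f) (Ioo (-R) R) :=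
  fun x hx => (hcs.diff_deriv hα hx).continuousAt.continuousWithinAt

lemma CatSol.strictMonoOn_deriv (hα : 0 < α) (hcs : CatSol α z₀ R f) :
    StrictMonoOn (deriv f) (Ioo (-R) R) := by
  apply strictMonoOn_of_deriv_pos (convex_Ioo _ _) (hcs.contOn_deriv hα)
  intro x hx
  rw [interior_Ioo] at hx
  exact hcs.deriv2_pos hα hx

lemma CatSol.deriv_pos (hα : 0 < α) (hcs : CatSol α z₀ R f) {x : ℝ}
    (hx : x ∈ Ioo (-R) R) (hx0 : 0 < x) : 0 < deriv f x := by
  have := (hcs.strictMonoOn_deriv hα) hcs.zero_mem hx hx0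
  rwa [hcs.2.2.2] at this

lemma CatSol.deriv_neg (hα : 0 < α) (hcs : CatSol α z₀ R f) {x : ℝ}
    (hx : x ∈ Ioo (-R) R) (hx0 : x < 0) : deriv f x < 0 := by
  have := (hcs.strictMonoOn_deriv hα) hx hcs.zero_mem hx0
  rwa [hcs.2.2.2] at this

lemma CatSol.diff_ne_zero (hα : 0 < α) (hcs : CatSol α z₀ R f) {x : ℝ}
    (hx : x ∈ Ioo (-R) R) (hx0 : x ≠ 0) : DifferentiableAt ℝ f x := by
  by_contra h
  have h0 : deriv f x = 0 := deriv_zero_of_not_differentiableAt h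
  rcases hx0.lt_or_gt with h' | h'
  · exact absurd h0 (ne_of_lt (hcs.deriv_neg hα hx h'))
  · exact absurd h0 (ne_of_gt (hcs.deriv_pos hα hx h'))

/-- the reflection of a solution is a solution -/
lemma CatSol.reflect (hcs : CatSol α z₀ R f) : CatSol α z₀ R (fun x => f (-x)) := by
  have hd1 : deriv (fun x => f (-x)) = fun x => -(deriv f (-x)) := by
    funext x; exact deriv_comp_neg f x
  have hd2 : ∀ x, deriv (deriv (fun x => f (-x))) x = deriv (deriv f) (-x) := by
    intro x
    rw [hd1]
    have : (fun x => -(deriv f (-x))) = fun x => -((fun y => deriv f (-y)) x) := rfl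
    rw [this, deriv.fun_neg, deriv_comp_neg (deriv f) x, neg_neg]
  refine ⟨hcs.1, fun x hx => ?_, by simpa using hcs.2.2.1, by simp [hd1, hcs.2.2.2]⟩
  have hx' : -x ∈ Ioo (-R) R := by
    constructor <;> [linarith [hx.2]; linarith [hx.1]]
  refine ⟨hcs.pos hx', ?_⟩
  rw [hd2, hd1]
  simpa using (hcs.2.1 (-x) hx').2

end Reg

section RightLim

variable {α z₀ R : ℝ} {f : ℝ → ℝ}

lemma CatSol.Icc_subset (hcs : CatSol α z₀ R f) {p q : ℝ} (hp : p ∈ Ioo (-R) R)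
    (hq : q ∈ Ioo (-R) R) : uIcc p q ⊆ Ioo (-R) R :=
  (ordConnected_Ioo).uIcc_subset hp hq

lemma CatSol.half_mem (hcs : CatSol α z₀ R f) : R / 2 ∈ Ioo (-R) R := by
  have := hcs.1; constructor <;> nlinarith

/-- On the right half-interval, `f` tends to some limit `a` at `0⁺`. -/
lemma CatSol.right_limit_exists (hα : 0 < α) (hcs : CatSol α z₀ R f) :
    Tendsto f (𝓝[>] (0:ℝ))
      (𝓝 (f (R/2) - ∫ t in (0:ℝ)..(R/2), deriv f t)) := by
  have hR := hcs.1
  set c := R / 2 with hc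
  have hcI : c ∈ Ioo (-R) R := hcs.half_mem
  have hc0 : 0 < c := by positivity
  set v := deriv f with hv
  set a := f c - ∫ t in (0:ℝ)..c, v t with ha
  -- integrability of v on subintervals of [0, c]
  have hIccI : Icc (0:ℝ) c ⊆ Ioo (-R) R := fun t ht =>
    ⟨lt_of_lt_of_le (neg_lt_zero.2 hR) ht.1, lt_of_le_of_lt ht.2 hcI.2⟩
  have hvcont : ContinuousOn v (Icc (0:ℝ) c) := (hcs.contOn_deriv hα).mono hIccI
  have hint : ∀ x ∈ Icc (0:ℝ) c, IntervalIntegrable v MeasureTheory.volume 0 x := by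
    intro x hx
    apply (hvcont.mono _).intervalIntegrable
    rw [uIcc_of_le hx.1]
    exact Icc_subset_Icc le_rfl hx.2
  -- key formula : f x = a + ∫ 0..x v for x ∈ Ioo 0 c
  have hkey : ∀ x ∈ Ioo (0:ℝ) c, f x = a + ∫ t in (0:ℝ)..x, v t := by
    intro x hx
    have hxI : x ∈ Ioo (-R) R :=
      ⟨lt_trans (neg_lt_zero.2 hR) hx.1, lt_trans hx.2 hcI.2⟩
    have hftc : ∫ t in x..c, v t = f c - f x := by
      apply intervalIntegral.integral_eq_sub_of_hasDerivAt
      · intro t ht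
        rw [uIcc_of_le (le_of_lt hx.2)] at ht
        have htI : t ∈ Ioo (-R) R := hIccI ⟨le_trans (le_of_lt hx.1) ht.1, ht.2⟩
        exact ((hcs.diff_ne_zero hα htI (ne_of_gt (lt_of_lt_of_le hx.1 ht.1))).hasDerivAt)
      · apply (hvcont.mono _).intervalIntegrable
        rw [uIcc_of_le (le_of_lt hx.2)]
        exact Icc_subset_Icc (le_of_lt hx.1) le_rfl
    have hadd : (∫ t in (0:ℝ)..x, v t) + ∫ t in x..c, v t = ∫ t in (0:ℝ)..c, v t :=
      intervalIntegral.integral_add_adjacent_intervals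
        (hint x ⟨le_of_lt hx.1, le_of_lt hx.2⟩)
        (by
          apply (hvcont.mono _).intervalIntegrable
          rw [uIcc_of_le (le_of_lt hx.2)]
          exact Icc_subset_Icc (le_of_lt hx.1) le_rfl)
    rw [ha]
    have := hadd
    rw [hftc] at this
    linarith
  -- a bound for v on [0,c]
  obtain ⟨C, hC⟩ := (isCompact_Icc).exists_bound_of_continuousOn hvcont
  -- the integral term tends to 0
  have hItend : Tendsto (fun x => ∫ t in (0:ℝ)..x, v t) (𝓝[>] (0:ℝ)) (𝓝 0) := by
    apply squeeze_zero_norm'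
    · filter_upwards [Ioo_mem_nhdsGT_of_mem (left_mem_Ico.2 hc0)] with x hx
      calc ‖∫ t in (0:ℝ)..x, v t‖ ≤ C * |x - 0| := by
            apply intervalIntegral.norm_integral_le_of_norm_le_const
            intro t ht
            rw [uIoc_of_le (le_of_lt hx.1)] at ht
            exact hC t ⟨le_of_lt ht.1, le_trans ht.2 (le_of_lt hx.2)⟩
        _ = C * |x| := by rw [sub_zero]
    · have : Tendsto (fun x : ℝ => C * |x|) (𝓝 (0:ℝ)) (𝓝 (C * |0|)) := by
        apply Tendsto.const_mul
        exact continuous_abs.continuousAt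
      simp only [abs_zero, mul_zero] at this
      exact this.mono_left nhdsWithin_le_nhds
  -- conclude
  have : Tendsto (fun x => a + ∫ t in (0:ℝ)..x, v t) (𝓝[>] (0:ℝ)) (𝓝 a) := by
    simpa using hItend.const_add a
  apply this.congr'
  filter_upwards [Ioo_mem_nhdsGT_of_mem (left_mem_Ico.2 hc0)] with x hx
  exact (hkey x hx).symm

end RightLim

section FirstIntegral

variable {α z₀ R : ℝ} {f : ℝ → ℝ}

/-- The energy `E = (1+f'^2) f^(-2α)` is conserved on subintervals where `f` is
differentiable. -/
lemma CatSol.E_eq (hα : 0 < α) (hcs : CatSol α z₀ R f) {p q : ℝ} (hpq : p < q)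
    (hsub : Icc p q ⊆ Ioo (-R) R)
    (hdiff : ∀ t ∈ Icc p q, DifferentiableAt ℝ f t) :
    (1 + (deriv f q) ^ 2) * (f q) ^ (-(2*α) : ℝ)
      = (1 + (deriv f p) ^ 2) * (f p) ^ (-(2*α) : ℝ) := by
  set v := deriv f with hv
  set E := fun x => (1 + (v x) ^ 2) * (f x) ^ (-(2*α) : ℝ) with hE
  have hD : ∀ t ∈ Icc p q, HasDerivAt E 0 t := by
    intro t ht
    have htI := hsub ht
    have hft : 0 < f t := hcs.pos htI
    have hfd : HasDerivAt f (v t) t := (hdiff t ht).hasDerivAt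
    have hvd : HasDerivAt v (α * (1 + v t ^ 2) / f t) t := hcs.hasDerivAt_deriv hα htI
    have h1 : HasDerivAt (fun x => 1 + (v x) ^ 2)
        (2 * v t ^ 1 * (α * (1 + v t ^ 2) / f t)) t := by
      simpa using ((hvd.pow 2).const_add 1)
    have h2 : HasDerivAt (fun x => (f x) ^ (-(2*α) : ℝ))
        (v t * (-(2*α)) * f t ^ ((-(2*α) : ℝ) - 1)) t :=
      hfd.rpow_const (Or.inl (ne_of_gt hft))
    have h3 := h1.mul h2
    have hrw : f t ^ ((-(2*α) : ℝ) - 1) = f t ^ (-(2*α) : ℝ) / f t := by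
      rw [Real.rpow_sub hft, Real.rpow_one]
    have : 2 * v t ^ 1 * (α * (1 + v t ^ 2) / f t) * f t ^ (-(2*α) : ℝ)
        + (1 + v t ^ 2) * (v t * (-(2*α)) * f t ^ ((-(2*α) : ℝ) - 1)) = 0 := by
      rw [hrw]; field_simp; ring
    rw [this] at h3
    exact h3
  have hcont : ContinuousOn E (Icc p q) := fun t ht => ((hD t ht).continuousAt).continuousWithinAt
  obtain ⟨c, _, hc⟩ := exists_hasDerivAt_eq_slope E (fun _ => 0) hpq hcont
    (fun t ht => hD t (Ioo_subset_Icc_self ht))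
  have h0 : E q - E p = 0 := by
    have hqp : q - p ≠ 0 := sub_ne_zero.mpr (ne_of_gt hpq)
    field_simp at hc
    linarith
  exact sub_eq_zero.mp h0

end FirstIntegral

section ContAtZero

variable {α z₀ R : ℝ} {f : ℝ → ℝ}

private lemma rpow_neg_tendsto_atTop {β : ℝ} (hβ : 0 < β) :
    Tendsto (fun y : ℝ => y ^ (-β : ℝ)) (𝓝[>] (0:ℝ)) atTop := by
  have h1 : Tendsto (fun y : ℝ => (y⁻¹) ^ (β : ℝ)) (𝓝[>] (0:ℝ)) atTop :=
    (tendsto_rpow_atTop hβ).comp tendsto_inv_nhdsGT_zero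
  apply h1.congr'
  filter_upwards [self_mem_nhdsWithin] with y (hy : (0:ℝ) < y)
  rw [Real.rpow_neg (le_of_lt hy), ← Real.inv_rpow (le_of_lt hy)]

/-- `f` tends to `z₀` at `0⁺`. -/
lemma CatSol.tendsto_right_zero (hα : 0 < α) (hz : 0 < z₀) (hcs : CatSol α z₀ R f) :
    Tendsto f (𝓝[>] (0:ℝ)) (𝓝 z₀) := by
  have hR := hcs.1
  set v := deriv f with hv
  obtain ha := hcs.right_limit_exists hα
  set a := f (R/2) - ∫ t in (0:ℝ)..(R/2), v t with hadef
  -- positivity facts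
  have hmemIoo : Ioo (0:ℝ) R ∈ 𝓝[>] (0:ℝ) := Ioo_mem_nhdsGT_of_mem (left_mem_Ico.2 hR)
  have hsubI : Ioo (0:ℝ) R ⊆ Ioo (-R) R := fun t ht =>
    ⟨lt_trans (neg_lt_zero.2 hR) ht.1, ht.2⟩
  have ha0 : 0 ≤ a := by
    apply ge_of_tendsto ha
    filter_upwards [hmemIoo] with x hx
    exact le_of_lt (hcs.pos (hsubI hx))
  -- v tends to 0 at 0⁺
  have hv0 : Tendsto v (𝓝[>] (0:ℝ)) (𝓝 0) := by
    have := (hcs.diff_deriv hα hcs.zero_mem).continuousAt.tendsto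
    rw [hcs.2.2.2] at this
    exact this.mono_left nhdsWithin_le_nhds
  -- E is constant on (0, R)
  have hEconst : ∀ x ∈ Ioo (0:ℝ) R,
      (1 + (v x) ^ 2) * (f x) ^ (-(2*α) : ℝ)
        = (1 + (v (R/2)) ^ 2) * (f (R/2)) ^ (-(2*α) : ℝ) := by
    intro x hx
    have hc2 : R/2 ∈ Ioo (0:ℝ) R := ⟨by positivity, by linarith⟩
    rcases lt_trichotomy x (R/2) with h | h | h
    · exact (hcs.E_eq hα h (fun t ht => hsubI ⟨lt_of_lt_of_le hx.1 ht.1,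
        lt_of_le_of_lt ht.2 hc2.2⟩) (fun t ht => hcs.diff_ne_zero hα
        (hsubI ⟨lt_of_lt_of_le hx.1 ht.1, lt_of_le_of_lt ht.2 hc2.2⟩)
        (ne_of_gt (lt_of_lt_of_le hx.1 ht.1)))).symm
    · rw [h]
    · exact hcs.E_eq hα h (fun t ht => hsubI ⟨lt_of_lt_of_le hc2.1 ht.1,
        lt_of_le_of_lt ht.2 hx.2⟩) (fun t ht => hcs.diff_ne_zero hα
        (hsubI ⟨lt_of_lt_of_le hc2.1 ht.1, lt_of_le_of_lt ht.2 hx.2⟩)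
        (ne_of_gt (lt_of_lt_of_le hc2.1 ht.1)))
  -- a is positive
  have hapos : 0 < a := by
    rcases ha0.lt_or_eq with h | h
    · exact h
    exfalso
    -- E tends to the constant, but also to atTop
    set k := (1 + (v (R/2)) ^ 2) * (f (R/2)) ^ (-(2*α) : ℝ) with hk
    have hEk : Tendsto (fun x => (1 + (v x) ^ 2) * (f x) ^ (-(2*α) : ℝ))
        (𝓝[>] (0:ℝ)) (𝓝 k) := by
      apply Tendsto.congr' _ tendsto_const_nhds
      filter_upwards [hmemIoo] with x hx
      exact (hEconst x hx).symm
    have hfpos : Tendsto f (𝓝[>] (0:ℝ)) (𝓝[>] (0:ℝ)) := by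
      rw [tendsto_nhdsWithin_iff]
      constructor
      · rw [← h] at ha; exact ha
      · filter_upwards [hmemIoo] with x hx
        exact hcs.pos (hsubI hx)
    have hrp : Tendsto (fun x => (f x) ^ (-(2*α) : ℝ)) (𝓝[>] (0:ℝ)) atTop :=
      (rpow_neg_tendsto_atTop (by positivity)).comp hfpos
    have hone : Tendsto (fun x => 1 + (v x) ^ 2) (𝓝[>] (0:ℝ)) (𝓝 1) := by
      have := ((hv0.pow 2).const_add 1)
      simpa using this
    have : Tendsto (fun x => (1 + (v x) ^ 2) * (f x) ^ (-(2*α) : ℝ))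
        (𝓝[>] (0:ℝ)) atTop := hone.pos_mul_atTop one_pos hrp
    exact not_tendsto_atTop_of_tendsto_nhds hEk this
  -- derivative of v tends to α / a at 0⁺
  have hdvlim : Tendsto (deriv v) (𝓝[>] (0:ℝ)) (𝓝 (α * (1 + 0 ^ 2) / a)) := by
    have h1 : Tendsto (fun x => α * (1 + (v x) ^ 2) / f x) (𝓝[>] (0:ℝ))
        (𝓝 (α * (1 + 0 ^ 2) / a)) := by
      apply Tendsto.div _ ha (ne_of_gt hapos)
      exact (((hv0.pow 2).const_add 1).const_mul α)
    apply h1.congr'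
    filter_upwards [hmemIoo] with x hx
    exact ((hcs.hasDerivAt_deriv hα (hsubI hx)).deriv).symm
  -- glue : v has right derivative α/a at 0
  have hglue : HasDerivWithinAt v (α * (1 + 0 ^ 2) / a) (Ici (0:ℝ)) 0 := by
    apply hasDerivWithinAt_Ici_of_tendsto_deriv
    · intro t ht
      exact ((hcs.diff_deriv hα (hsubI ht)).differentiableWithinAt)
    · exact ((hcs.diff_deriv hα hcs.zero_mem).continuousAt.continuousWithinAt)
    · exact hmemIoo
    · exact hdvlim
  -- but v also has derivative α/z₀ at 0
  have hat : HasDerivWithinAt v (α * (1 + 0 ^ 2) / z₀) (Ici (0:ℝ)) 0 := by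
    have := (hcs.hasDerivAt_deriv hα hcs.zero_mem).hasDerivWithinAt (s := Ici (0:ℝ))
    rwa [hcs.2.2.2, hcs.2.2.1] at this
  have huniq : α * (1 + 0 ^ 2) / a = α * (1 + 0 ^ 2) / z₀ := by
    have hu : UniqueDiffWithinAt ℝ (Ici (0:ℝ)) 0 := (uniqueDiffOn_Ici 0) 0 self_mem_Ici
    rw [← hglue.derivWithin hu, ← hat.derivWithin hu]
  have haz : a = z₀ := by
    have hα' : α ≠ 0 := ne_of_gt hα
    field_simp at huniq
    linarith [huniq]
  rwa [haz] at ha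

end ContAtZero

section FullReg

variable {α z₀ R : ℝ} {f : ℝ → ℝ}

lemma tendsto_neg_nhdsWithin_lt : Tendsto (fun x : ℝ => -x) (𝓝[<] (0:ℝ)) (𝓝[>] (0:ℝ)) := by
  apply tendsto_nhdsWithin_of_tendsto_nhds_of_eventually_within
  · simpa using (continuous_neg.tendsto (0:ℝ)).mono_left nhdsWithin_le_nhds
  · filter_upwards [self_mem_nhdsWithin] with x (hx : x < 0)
    simpa using hx

lemma CatSol.tendsto_left_zero (hα : 0 < α) (hz : 0 < z₀) (hcs : CatSol α z₀ R f) :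
    Tendsto f (𝓝[<] (0:ℝ)) (𝓝 z₀) := by
  have h := (hcs.reflect.tendsto_right_zero hα hz).comp tendsto_neg_nhdsWithin_lt
  simpa [Function.comp_def] using h

lemma CatSol.continuousAt_zero (hα : 0 < α) (hz : 0 < z₀) (hcs : CatSol α z₀ R f) :
    ContinuousAt f 0 := by
  rw [ContinuousAt, hcs.2.2.1, ← nhdsLT_sup_nhdsGE (0:ℝ), tendsto_sup]
  refine ⟨hcs.tendsto_left_zero hα hz, ?_⟩
  rw [← Ioi_union_left, nhdsWithin_union, tendsto_sup]
  constructor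
  · exact hcs.tendsto_right_zero hα hz
  · rw [nhdsWithin_singleton, tendsto_pure_left]
    intro s hs
    rw [hcs.2.2.1]
    exact mem_of_mem_nhds hs

lemma CatSol.hasDerivAt_zero (hα : 0 < α) (hz : 0 < z₀) (hcs : CatSol α z₀ R f) :
    HasDerivAt f 0 0 := by
  have hR := hcs.1
  have hv0 : Tendsto (deriv f) (𝓝 (0:ℝ)) (𝓝 0) := by
    have := (hcs.diff_deriv hα hcs.zero_mem).continuousAt.tendsto
    rwa [hcs.2.2.2] at this
  have hright : HasDerivWithinAt f 0 (Ici (0:ℝ)) 0 := by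
    apply hasDerivWithinAt_Ici_of_tendsto_deriv (s := Ioo (0:ℝ) R)
    · intro t ht
      exact (hcs.diff_ne_zero hα ⟨by linarith [ht.1, hR], ht.2⟩
        (ne_of_gt ht.1)).differentiableWithinAt
    · exact (hcs.continuousAt_zero hα hz).continuousWithinAt
    · exact Ioo_mem_nhdsGT_of_mem (left_mem_Ico.2 hR)
    · exact hv0.mono_left nhdsWithin_le_nhds
  have hleft : HasDerivWithinAt f 0 (Iic (0:ℝ)) 0 := by
    apply hasDerivWithinAt_Iic_of_tendsto_deriv (s := Ioo (-R) (0:ℝ))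
    · intro t ht
      exact (hcs.diff_ne_zero hα ⟨ht.1, by linarith [ht.2, hR]⟩
        (ne_of_lt ht.2)).differentiableWithinAt
    · exact (hcs.continuousAt_zero hα hz).continuousWithinAt
    · exact Ioo_mem_nhdsLT_of_mem (right_mem_Ioc.2 (neg_lt_zero.2 hR))
    · exact hv0.mono_left nhdsWithin_le_nhds
  have := hleft.union hright
  rwa [Iic_union_Ici, hasDerivWithinAt_univ] at this

/-- `f` is a genuine solution: differentiable everywhere on the interval. -/
lemma CatSol.hasDerivAt (hα : 0 < α) (hz : 0 < z₀) (hcs : CatSol α z₀ R f) {x : ℝ}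
    (hx : x ∈ Ioo (-R) R) : HasDerivAt f (deriv f x) x := by
  rcases eq_or_ne x 0 with h | h
  · subst h
    rw [hcs.2.2.2]
    exact hcs.hasDerivAt_zero hα hz
  · exact (hcs.diff_ne_zero hα hx h).hasDerivAt

/-- The first integral of the motion: `(1+f'^2) f^(-2α)` is identically `z₀^(-2α)`. -/
lemma CatSol.first_integral (hα : 0 < α) (hz : 0 < z₀) (hcs : CatSol α z₀ R f) {x : ℝ}
    (hx : x ∈ Ioo (-R) R) :
    (1 + (deriv f x) ^ 2) * (f x) ^ (-(2*α) : ℝ) = z₀ ^ (-(2*α) : ℝ) := by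
  have h0 : (1 + (deriv f 0) ^ 2) * (f 0) ^ (-(2*α) : ℝ) = z₀ ^ (-(2*α) : ℝ) := by
    rw [hcs.2.2.2, hcs.2.2.1]; norm_num
  have hsub : ∀ p q : ℝ, p ∈ Ioo (-R) R → q ∈ Ioo (-R) R → Icc p q ⊆ Ioo (-R) R :=
    fun p q hp hq t ht => ⟨lt_of_lt_of_le hp.1 ht.1, lt_of_le_of_lt ht.2 hq.2⟩
  rcases lt_trichotomy x 0 with h | h | h
  · rw [← h0]
    exact (hcs.E_eq hα h (hsub _ _ hx hcs.zero_mem)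
      (fun t ht => ((hcs.hasDerivAt hα hz ((hsub _ _ hx hcs.zero_mem) ht)).differentiableAt))).symm
  · rw [h, h0]
  · rw [← h0]
    exact hcs.E_eq hα h (hsub _ _ hcs.zero_mem hx)
      (fun t ht => ((hcs.hasDerivAt hα hz ((hsub _ _ hcs.zero_mem hx) ht)).differentiableAt))

/-- `f ≥ z₀` on the interval. -/
lemma CatSol.ge_z₀ (hα : 0 < α) (hz : 0 < z₀) (hcs : CatSol α z₀ R f) {x : ℝ}
    (hx : x ∈ Ioo (-R) R) : z₀ ≤ f x := by
  have h := hcs.first_integral hα hz hx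
  have hfx := hcs.pos hx
  -- (1 + v^2) * f^(-2α) = z₀^(-2α) and 1 + v^2 ≥ 1 yields f^(-2α) ≤ z₀^(-2α)
  have h1 : (f x) ^ (-(2*α) : ℝ) ≤ z₀ ^ (-(2*α) : ℝ) := by
    nlinarith [Real.rpow_pos_of_pos hfx (-(2*α) : ℝ), sq_nonneg (deriv f x)]
  by_contra hcon
  push_neg at hcon
  have h2 : z₀ ^ (-(2*α) : ℝ) < (f x) ^ (-(2*α) : ℝ) :=
    Real.rpow_lt_rpow_of_neg hfx hcon (by linarith)
  linarith

end FullReg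

section Uniqueness

/-- The vector field of the catenary ODE as a first-order system. -/
noncomputable def catF (α : ℝ) : ℝ × ℝ → ℝ × ℝ := fun p => (p.2, α * (1 + p.2 ^ 2) / p.1)

lemma catF_lipschitz {α ε M : ℝ} (hα : 0 < α) (hε : 0 < ε) (hM : 0 ≤ M) :
    LipschitzOnWith (Real.toNNReal (1 + α * ((1 + M^2)/ε^2 + 2*M/ε)))
      (catF α) (Icc ε M ×ˢ Icc (-M) M) := by
  set Kr : ℝ := 1 + α * ((1 + M^2)/ε^2 + 2*M/ε) with hKr
  have hKr0 : 0 ≤ Kr := by positivity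
  rw [lipschitzOnWith_iff_dist_le_mul]
  intro p hp q hq
  rw [Real.coe_toNNReal _ hKr0]
  obtain ⟨hp1, hp2⟩ := hp
  obtain ⟨hq1, hq2⟩ := hq
  simp only [mem_Icc] at hp1 hp2 hq1 hq2
  have hp1' : ε ≤ p.1 := hp1.1
  have hq1' : ε ≤ q.1 := hq1.1
  have hp1p : 0 < p.1 := lt_of_lt_of_le hε hp1'
  have hq1p : 0 < q.1 := lt_of_lt_of_le hε hq1'
  have habs2p : |p.2| ≤ M := abs_le.2 ⟨hp2.1, hp2.2⟩
  have habs2q : |q.2| ≤ M := abs_le.2 ⟨hq2.1, hq2.2⟩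
  set d := dist p q with hd
  have hd0 : 0 ≤ d := dist_nonneg
  have h1d : dist p.1 q.1 ≤ d := le_trans (le_max_left _ _) (le_of_eq (Prod.dist_eq).symm)
  have h2d : dist p.2 q.2 ≤ d := le_trans (le_max_right _ _) (le_of_eq (Prod.dist_eq).symm)
  rw [Real.dist_eq] at h1d h2d
  simp only [catF, Prod.dist_eq]
  apply max_le
  · rw [Real.dist_eq]
    calc |p.2 - q.2| ≤ d := h2d
      _ ≤ Kr * d := by
          apply le_mul_of_one_le_left hd0
          have h : 0 ≤ α * ((1 + M^2)/ε^2 + 2*M/ε) := by positivity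
          rw [hKr]
          linarith
  · rw [Real.dist_eq]
    have hid : α * (1 + p.2^2) / p.1 - α * (1 + q.2^2) / q.1
        = α * ((1 + p.2^2) * (q.1 - p.1) / (p.1 * q.1) + (p.2 + q.2) * (p.2 - q.2) / q.1) := by
      field_simp
      ring
    rw [hid, abs_mul, abs_of_pos hα]
    have hb1 : |(1 + p.2^2) * (q.1 - p.1) / (p.1 * q.1)| ≤ (1 + M^2)/ε^2 * d := by
      rw [abs_div, abs_mul]
      have hnum : |1 + p.2^2| ≤ 1 + M^2 := by
        rw [abs_of_pos (by positivity)]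
        nlinarith
      have hden : ε^2 ≤ |p.1 * q.1| := by
        rw [abs_of_pos (by positivity)]
        nlinarith
      have h1 : |q.1 - p.1| ≤ d := by rwa [abs_sub_comm]
      rw [div_le_iff₀ (by positivity)]
      calc |1 + p.2 ^ 2| * |q.1 - p.1| ≤ (1 + M^2) * d := by
            apply mul_le_mul hnum h1 (abs_nonneg _) (by positivity)
        _ = (1 + M^2)/ε^2 * d * ε^2 := by field_simp
        _ ≤ (1 + M^2)/ε^2 * d * |p.1 * q.1| := by
            apply mul_le_mul_of_nonneg_left hden (by positivity)
    have hb2 : |(p.2 + q.2) * (p.2 - q.2) / q.1| ≤ 2*M/ε * d := by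
      rw [abs_div, abs_mul]
      have hnum : |p.2 + q.2| ≤ 2*M := by
        calc |p.2 + q.2| ≤ |p.2| + |q.2| := abs_add_le _ _
          _ ≤ 2*M := by linarith
      have hden : ε ≤ |q.1| := by rwa [abs_of_pos hq1p]
      rw [div_le_iff₀ (by positivity)]
      calc |p.2 + q.2| * |p.2 - q.2| ≤ 2*M * d := by
            apply mul_le_mul hnum h2d (abs_nonneg _) (by positivity)
        _ = 2*M/ε * d * ε := by field_simp
        _ ≤ 2*M/ε * d * |q.1| := by
            apply mul_le_mul_of_nonneg_left hden (by positivity)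
    calc α * |(1 + p.2^2) * (q.1 - p.1) / (p.1 * q.1) + (p.2 + q.2) * (p.2 - q.2) / q.1|
        ≤ α * ((1 + M^2)/ε^2 * d + 2*M/ε * d) := by
          apply mul_le_mul_of_nonneg_left _ (le_of_lt hα)
          exact le_trans (abs_add_le _ _) (add_le_add hb1 hb2)
      _ ≤ Kr * d := by
          have he : α * ((1 + M^2)/ε^2 * d + 2*M/ε * d) = (Kr - 1) * d := by rw [hKr]; ring
          nlinarith [hd0]

end Uniqueness

section Uniq2

variable {α z₀ R₁ R₂ : ℝ} {f g : ℝ → ℝ}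

/-- Uniqueness: two solutions with the same initial data agree. -/
lemma CatSol.val_eq (hα : 0 < α) (hz : 0 < z₀) (hf : CatSol α z₀ R₁ f)
    (hg : CatSol α z₀ R₂ g) {x : ℝ} (hx1 : x ∈ Ioo (-R₁) R₁) (hx2 : x ∈ Ioo (-R₂) R₂) :
    g x = f x := by
  have hr0 : 0 < min R₁ R₂ := lt_min hf.1 hg.1
  have hxr : |x| < min R₁ R₂ := by
    rw [abs_lt]
    constructor
    · have := lt_min (neg_lt_of_neg_lt hx1.1) (neg_lt_of_neg_lt hx2.1)
      linarith
    · exact lt_min hx1.2 hx2.2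
  set b := (|x| + min R₁ R₂) / 2 with hb
  have hxb : |x| < b := by rw [hb]; linarith
  have hbr : b < min R₁ R₂ := by rw [hb]; linarith [abs_nonneg x]
  have hb0 : 0 < b := lt_of_le_of_lt (abs_nonneg x) hxb
  have hK1 : Icc (-b) b ⊆ Ioo (-R₁) R₁ := fun t ht => by
    constructor
    · calc -R₁ ≤ -(min R₁ R₂) := neg_le_neg (min_le_left _ _)
        _ < -b := by linarith
        _ ≤ t := ht.1
    · calc t ≤ b := ht.2
        _ < min R₁ R₂ := hbr
        _ ≤ R₁ := min_le_left _ _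
  have hK2 : Icc (-b) b ⊆ Ioo (-R₂) R₂ := fun t ht => by
    constructor
    · calc -R₂ ≤ -(min R₁ R₂) := neg_le_neg (min_le_right _ _)
        _ < -b := by linarith
        _ ≤ t := ht.1
    · calc t ≤ b := ht.2
        _ < min R₁ R₂ := hbr
        _ ≤ R₂ := min_le_right _ _
  have hne : (Icc (-b) b).Nonempty := ⟨0, by constructor <;> linarith⟩
  -- continuity of the four functions on the compact interval
  have hfc : ContinuousOn f (Icc (-b) b) := fun t ht =>
    ((hf.hasDerivAt hα hz (hK1 ht)).differentiableAt.continuousAt).continuousWithinAt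
  have hgc : ContinuousOn g (Icc (-b) b) := fun t ht =>
    ((hg.hasDerivAt hα hz (hK2 ht)).differentiableAt.continuousAt).continuousWithinAt
  have hfc' : ContinuousOn (deriv f) (Icc (-b) b) := fun t ht =>
    ((hf.diff_deriv hα (hK1 ht)).continuousAt).continuousWithinAt
  have hgc' : ContinuousOn (deriv g) (Icc (-b) b) := fun t ht =>
    ((hg.diff_deriv hα (hK2 ht)).continuousAt).continuousWithinAt
  -- positive lower bound
  obtain ⟨t₁, ht₁, hmin₁⟩ := isCompact_Icc.exists_isMinOn hne hfc
  obtain ⟨t₂, ht₂, hmin₂⟩ := isCompact_Icc.exists_isMinOn hne hgc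
  set ε := min (f t₁) (g t₂) with hε
  have hε0 : 0 < ε := lt_min (hf.pos (hK1 ht₁)) (hg.pos (hK2 ht₂))
  -- upper bounds
  obtain ⟨M₁, hM₁⟩ := isCompact_Icc.exists_bound_of_continuousOn hfc
  obtain ⟨M₂, hM₂⟩ := isCompact_Icc.exists_bound_of_continuousOn hgc
  obtain ⟨M₃, hM₃⟩ := isCompact_Icc.exists_bound_of_continuousOn hfc'
  obtain ⟨M₄, hM₄⟩ := isCompact_Icc.exists_bound_of_continuousOn hgc'
  set M := max (max M₁ M₂) (max M₃ M₄) with hM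
  have hM0 : 0 ≤ M := by
    have := hM₁ 0 ⟨by linarith, by linarith⟩
    have h2 := le_trans (norm_nonneg (f 0)) this
    calc (0:ℝ) ≤ M₁ := h2
      _ ≤ M := le_trans (le_max_left _ _) (le_max_left _ _)
  set S := Icc ε M ×ˢ Icc (-M) M with hS
  -- membership of the trajectories
  have hmemf : ∀ t ∈ Icc (-b) b, (f t, deriv f t) ∈ S := by
    intro t ht
    refine ⟨⟨?_, ?_⟩, ?_⟩
    · exact le_trans (min_le_left _ _) (hmin₁ ht)
    · calc f t ≤ ‖f t‖ := le_abs_self _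
        _ ≤ M₁ := hM₁ t ht
        _ ≤ M := le_trans (le_max_left _ _) (le_max_left _ _)
    · have h3 : |deriv f t| ≤ M := by
        calc |deriv f t| ≤ M₃ := hM₃ t ht
          _ ≤ M := le_trans (le_max_left _ _) (le_max_right _ _)
      rw [mem_Icc]
      exact abs_le.1 h3
  have hmemg : ∀ t ∈ Icc (-b) b, (g t, deriv g t) ∈ S := by
    intro t ht
    refine ⟨⟨?_, ?_⟩, ?_⟩
    · exact le_trans (min_le_right _ _) (hmin₂ ht)
    · calc g t ≤ ‖g t‖ := le_abs_self _
        _ ≤ M₂ := hM₂ t ht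
        _ ≤ M := le_trans (le_max_right _ _) (le_max_left _ _)
    · have h3 : |deriv g t| ≤ M := by
        calc |deriv g t| ≤ M₄ := hM₄ t ht
          _ ≤ M := le_trans (le_max_right _ _) (le_max_right _ _)
      rw [mem_Icc]
      exact abs_le.1 h3
  -- apply the uniqueness theorem for ODEs
  have key := ODE_solution_unique_of_mem_Ioo
    (v := fun _ p => catF α p) (s := fun _ => S)
    (K := Real.toNNReal (1 + α * ((1 + M^2)/ε^2 + 2*M/ε)))
    (f := fun t => (g t, deriv g t)) (g := fun t => (f t, deriv f t))
    (a := -b) (b := b) (t₀ := 0)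
    (fun _ _ => catF_lipschitz hα hε0 hM0)
    ⟨by linarith, hb0⟩
    (fun t ht => by
      refine ⟨?_, hmemg t (Ioo_subset_Icc_self ht)⟩
      have h1 : HasDerivAt g (deriv g t) t := hg.hasDerivAt hα hz (hK2 (Ioo_subset_Icc_self ht))
      have h2 : HasDerivAt (deriv g) (α * (1 + (deriv g t)^2) / g t) t :=
        hg.hasDerivAt_deriv hα (hK2 (Ioo_subset_Icc_self ht))
      exact h1.prodMk h2)
    (fun t ht => by
      refine ⟨?_, hmemf t (Ioo_subset_Icc_self ht)⟩
      have h1 : HasDerivAt f (deriv f t) t := hf.hasDerivAt hα hz (hK1 (Ioo_subset_Icc_self ht))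
      have h2 : HasDerivAt (deriv f) (α * (1 + (deriv f t)^2) / f t) t :=
        hf.hasDerivAt_deriv hα (hK1 (Ioo_subset_Icc_self ht))
      exact h1.prodMk h2)
    (by
      rw [hg.2.2.1, hg.2.2.2, hf.2.2.1, hf.2.2.2])
  have hx : x ∈ Ioo (-b) b := by
    rw [abs_lt] at hxb
    exact ⟨hxb.1, hxb.2⟩
  have := key hx
  exact congrArg Prod.fst this

end Uniq2

section Scaling

variable {α z₀ R : ℝ} {f : ℝ → ℝ}

lemma CatSol.scale (hcs : CatSol α z₀ R f) {lam : ℝ} (hlam : 0 < lam) :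
    CatSol α (lam * z₀) (lam * R) (fun x => lam * f (x / lam)) := by
  have hl : lam ≠ 0 := ne_of_gt hlam
  have hd1 : deriv (fun x => lam * f (x / lam)) = fun x => deriv f (x / lam) := by
    funext x; exact deriv_scale f hl x
  have hd2 : ∀ x, deriv (deriv (fun x => lam * f (x / lam))) x
      = lam⁻¹ * deriv (deriv f) (x / lam) := by
    intro x
    rw [hd1]
    exact deriv_scale' (deriv f) hl x
  refine ⟨mul_pos hlam hcs.1, fun x hx => ?_, by simp [hcs.2.2.1], by
    rw [hd1]; simp [hcs.2.2.2]⟩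
  have hxI : x / lam ∈ Ioo (-R) R := by
    constructor
    · rw [lt_div_iff₀ hlam]
      calc -R * lam = -(lam * R) := by ring
        _ < x := hx.1
    · rw [div_lt_iff₀ hlam]
      calc x < lam * R := hx.2
        _ = R * lam := by ring
  obtain ⟨hpos, hode⟩ := hcs.2.1 (x / lam) hxI
  constructor
  · positivity
  · rw [hd2, hd1]
    rw [div_eq_div_iff (by positivity) (by positivity)] at hode ⊢
    calc lam⁻¹ * deriv (deriv f) (x / lam) * (lam * f (x / lam))
        = deriv (deriv f) (x / lam) * f (x / lam) := by field_simp
      _ = α * (1 + deriv f (x / lam) ^ 2) := hode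
  
lemma MaximalCatSol.scale (hf : MaximalCatSol α z₀ R f) {lam : ℝ} (hlam : 0 < lam) :
    MaximalCatSol α (lam * z₀) (lam * R) (fun x => lam * f (x / lam)) := by
  refine ⟨hf.1.scale hlam, ?_⟩
  intro R'' g hR'' hg heq
  have hl : lam ≠ 0 := ne_of_gt hlam
  have hg' : CatSol α z₀ (lam⁻¹ * R'') (fun x => lam⁻¹ * g (x / lam⁻¹)) := by
    have := hg.scale (inv_pos.2 hlam)
    rwa [inv_mul_cancel_left₀ hl] at this
  apply hf.2 (lam⁻¹ * R'') _ _ hg'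
  · intro y hy
    have hly : lam * y ∈ Ioo (-(lam * R)) (lam * R) := by
      constructor
      · have := hy.1; nlinarith
      · have := hy.2; nlinarith
    have h1 : g (lam * y) = lam * f y := by
      have := heq hly
      simpa [mul_div_cancel_left₀ _ hl] using this
    show lam⁻¹ * g (y / lam⁻¹) = f y
    rw [div_eq_mul_inv, inv_inv, mul_comm y lam, h1, inv_mul_cancel_left₀ hl]
  · calc R = lam⁻¹ * (lam * R) := by field_simp
      _ < lam⁻¹ * R'' := by
        apply mul_lt_mul_of_pos_left hR'' (inv_pos.2 hlam)

end Scaling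

section Blowup

variable {α z₀ R : ℝ} {f : ℝ → ℝ}

lemma deriv_eqOn_open {u w : ℝ → ℝ} {s : Set ℝ} (hs : IsOpen s) (heq : EqOn u w s)
    {x : ℝ} (hx : x ∈ s) : deriv u x = deriv w x :=
  Filter.EventuallyEq.deriv_eq (eventuallyEq_of_mem (hs.mem_nhds hx) heq)

theorem MaximalCatSol.blowup (hα : 1 < α) (hz : 0 < z₀) (hf : MaximalCatSol α z₀ R f) :
    Tendsto f (𝓝[<] R) atTop := by
  classical
  have hα0 : 0 < α := lt_trans one_pos hα
  obtain ⟨hcs, hmax⟩ := hf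
  have hR : 0 < R := hcs.1
  by_contra hnot
  -- evenness of f
  have feven : ∀ x ∈ Ioo (-R) R, f (-x) = f x := by
    intro x hx
    have hx' : -x ∈ Ioo (-R) R := ⟨by linarith [hx.2], by linarith [hx.1]⟩
    exact CatSol.val_eq hα0 hz hcs hcs.reflect (x := x) hx hx
  -- strict monotonicity on [0, R)
  have hsub0 : Ico (0:ℝ) R ⊆ Ioo (-R) R := fun t ht => ⟨by linarith [ht.1], ht.2⟩
  have hmono : StrictMonoOn f (Ico 0 R) := by
    apply strictMonoOn_of_deriv_pos (convex_Ico _ _)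
    · intro t ht
      exact ((hcs.hasDerivAt hα0 hz (hsub0 ht)).differentiableAt.continuousAt).continuousWithinAt
    · intro t ht
      rw [interior_Ico] at ht
      rw [(hcs.hasDerivAt hα0 hz (hsub0 ⟨le_of_lt ht.1, ht.2⟩)).deriv]
      exact hcs.deriv_pos hα0 (hsub0 ⟨le_of_lt ht.1, ht.2⟩) ht.1
  -- a bound M for f on [0, R)
  obtain ⟨M, hM⟩ : ∃ M, ∀ x ∈ Ico (0:ℝ) R, f x ≤ M := by
    rw [tendsto_atTop] at hnot
    push_neg at hnot
    obtain ⟨M, hM⟩ := hnot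
    refine ⟨M, fun x hx => ?_⟩
    have hIoo : Ioo x R ∈ 𝓝[<] R := Ioo_mem_nhdsLT_of_mem ⟨hx.2, le_rfl⟩
    obtain ⟨y, hy1, hy2⟩ := (hM.and_eventually hIoo).exists
    have hstep : f x ≤ f y :=
      hmono.monotoneOn hx ⟨le_trans hx.1 (le_of_lt hy2.1), hy2.2⟩ (le_of_lt hy2.1)
    linarith
  -- bound on all of the interval
  have hMall : ∀ x ∈ Ioo (-R) R, f x ≤ M := by
    intro x hx
    rcases le_or_gt 0 x with h | h
    · exact hM x ⟨h, hx.2⟩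
    · rw [← feven x hx]
      exact hM (-x) ⟨by linarith, by linarith [hx.1]⟩
  have hMz : z₀ ≤ M := by
    have := hM 0 ⟨le_rfl, hR⟩
    rwa [hcs.2.2.1] at this
  have hM0 : 0 < M := lt_of_lt_of_le hz hMz
  -- bound for the derivative via the first integral
  set Mv := Real.sqrt (z₀ ^ (-(2*α) : ℝ) * M ^ ((2*α) : ℝ)) with hMv
  have hvB : ∀ x ∈ Ioo (-R) R, |deriv f x| ≤ Mv := by
    intro x hx
    have hfi := hcs.first_integral hα0 hz hx
    have hfpos := hcs.pos hx
    have h1 : 1 + (deriv f x) ^ 2 = z₀ ^ (-(2*α) : ℝ) * (f x) ^ ((2*α) : ℝ) := by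
      have hcancel : (f x) ^ (-(2*α) : ℝ) * (f x) ^ ((2*α) : ℝ) = 1 := by
        rw [← Real.rpow_add hfpos]
        norm_num
      calc 1 + (deriv f x) ^ 2
          = (1 + (deriv f x) ^ 2) * ((f x) ^ (-(2*α) : ℝ) * (f x) ^ ((2*α) : ℝ)) := by
            rw [hcancel, mul_one]
        _ = ((1 + (deriv f x) ^ 2) * (f x) ^ (-(2*α) : ℝ)) * (f x) ^ ((2*α) : ℝ) := by ring
        _ = z₀ ^ (-(2*α) : ℝ) * (f x) ^ ((2*α) : ℝ) := by rw [hfi]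
    have h2 : (f x) ^ ((2*α) : ℝ) ≤ M ^ ((2*α) : ℝ) :=
      Real.rpow_le_rpow (le_of_lt hfpos) (hMall x hx) (by positivity)
    have h3 : (deriv f x) ^ 2 ≤ z₀ ^ (-(2*α) : ℝ) * M ^ ((2*α) : ℝ) := by
      have hz2 : 0 < z₀ ^ (-(2*α) : ℝ) := Real.rpow_pos_of_pos hz _
      nlinarith [Real.rpow_pos_of_pos hfpos ((2*α) : ℝ)]
    rw [hMv, ← Real.sqrt_sq_eq_abs]
    exact Real.sqrt_le_sqrt h3
  -- limits of f and deriv f at R⁻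
  set u := fun x : ℝ => f (max x 0) with hu
  set uv := fun x : ℝ => deriv f (max x 0) with huv
  have hmaxmem : ∀ x : ℝ, x < R → max x 0 ∈ Ico (0:ℝ) R :=
    fun x hx => ⟨le_max_right _ _, max_lt hx hR⟩
  have huIoo : Ioo (0:ℝ) R ∈ 𝓝[<] R := Ioo_mem_nhdsLT_of_mem ⟨hR, le_rfl⟩
  have huf : ∀ᶠ x in 𝓝[<] R, u x = f x := by
    filter_upwards [huIoo] with x hx
    rw [hu]; simp [max_eq_left (le_of_lt hx.1)]
  have huvf : ∀ᶠ x in 𝓝[<] R, uv x = deriv f x := by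
    filter_upwards [huIoo] with x hx
    rw [huv]; simp [max_eq_left (le_of_lt hx.1)]
  have humono : MonotoneOn u (Iio R) := by
    intro x hx y hy hxy
    exact hmono.monotoneOn (hmaxmem x hx) (hmaxmem y hy) (max_le_max hxy le_rfl)
  have huvmono : MonotoneOn uv (Iio R) := by
    intro x hx y hy hxy
    exact ((hcs.strictMonoOn_deriv hα0).monotoneOn) (hsub0 (hmaxmem x hx))
      (hsub0 (hmaxmem y hy)) (max_le_max hxy le_rfl)
  have hubdd : BddAbove (u '' Iio R) := by
    refine ⟨M, fun z hz' => ?_⟩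
    obtain ⟨x, hx, rfl⟩ := hz'
    exact hM _ (hmaxmem x hx)
  have huvbdd : BddAbove (uv '' Iio R) := by
    refine ⟨Mv, fun z hz' => ?_⟩
    obtain ⟨x, hx, rfl⟩ := hz'
    exact le_of_abs_le (hvB _ (hsub0 (hmaxmem x hx)))
  set L := sSup (u '' Iio R) with hL
  set V := sSup (uv '' Iio R) with hV
  have hfL : Tendsto f (𝓝[<] R) (𝓝 L) :=
    (humono.tendsto_nhdsLT hubdd).congr' huf
  have hvV : Tendsto (deriv f) (𝓝[<] R) (𝓝 V) :=
    (huvmono.tendsto_nhdsLT huvbdd).congr' huvf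
  have hLz : z₀ ≤ L := by
    apply ge_of_tendsto hfL
    filter_upwards [huIoo] with x hx
    exact hcs.ge_z₀ hα0 hz ⟨by linarith [hx.1], hx.2⟩
  have hL0 : 0 < L := lt_of_lt_of_le hz hLz
  -- the vector field is C¹ near (L, V)
  have hFc : ContDiffAt ℝ 1 (catF α) (L, V) := by
    apply ContDiffAt.prodMk
    · exact contDiff_snd.contDiffAt
    · apply ContDiffAt.div
      · exact (contDiff_const.mul (contDiff_const.add (contDiff_snd.pow 2))).contDiffAt
      · exact contDiff_fst.contDiffAt
      · exact ne_of_gt hL0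
  -- local solution through (L, V) at time R
  obtain ⟨y, hyR, ε, hε, hy⟩ := ContDiffAt.exists_forall_mem_closedBall_exists_eq_forall_mem_Ioo_hasDerivAt₀ hFc R
  set h := fun t => (y t).1 with hh
  set w := fun t => (y t).2 with hw
  have hRmem : R ∈ Ioo (R - ε) (R + ε) := ⟨by linarith, by linarith⟩
  have hhd : ∀ t ∈ Ioo (R - ε) (R + ε), HasDerivAt h (w t) t := by
    intro t ht
    have := (ContinuousLinearMap.fst ℝ ℝ ℝ).hasFDerivAt.comp_hasDerivAt t (hy t ht)
    simpa [catF, hh, hw, Function.comp_def] using this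
  have hwd : ∀ t ∈ Ioo (R - ε) (R + ε), HasDerivAt w (α * (1 + (w t) ^ 2) / h t) t := by
    intro t ht
    have := (ContinuousLinearMap.snd ℝ ℝ ℝ).hasFDerivAt.comp_hasDerivAt t (hy t ht)
    simpa [catF, hh, hw, Function.comp_def] using this
  have hhR : h R = L := by show (y R).1 = L; rw [hyR]
  have hwR : w R = V := by show (y R).2 = V; rw [hyR]
  -- positivity of h near R
  have hhcont : ContinuousAt h R := (hhd R hRmem).differentiableAt.continuousAt
  have hwcont : ContinuousAt w R := (hwd R hRmem).differentiableAt.continuousAt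
  have hev : ∀ᶠ t in 𝓝 R, 0 < h t := by
    have : ∀ᶠ z in 𝓝 (h R), 0 < z := by
      rw [hhR]
      exact eventually_gt_nhds hL0
    exact hhcont.tendsto.eventually this
  obtain ⟨δ, hδ0, hδ⟩ := Metric.eventually_nhds_iff.mp hev
  set ρ := min δ ε / 2 with hρ
  have hρ0 : 0 < ρ := by rw [hρ]; positivity
  have hρδ : ρ < δ := by
    rw [hρ]
    rcases le_total δ ε with hc | hc
    · rw [min_eq_left hc]; linarith
    · rw [min_eq_right hc]; linarith
  have hρε : ρ < ε := by
    rw [hρ]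
    rcases le_total δ ε with hc | hc
    · rw [min_eq_left hc]; linarith
    · rw [min_eq_right hc]; linarith
  set R' := R + ρ with hR'
  -- the glued function
  set g := fun x : ℝ => if x ∈ Ioo (-R) R then f x else h |x| with hgdef
  have hgf : EqOn g f (Ioo (-R) R) := fun x hx => if_pos hx
  have hIopen : IsOpen (Ioo (-R) (R:ℝ)) := isOpen_Ioo
  have hgf_ev : ∀ x ∈ Ioo (-R) R, g =ᶠ[𝓝 x] f :=
    fun x hx => eventuallyEq_of_mem (hIopen.mem_nhds hx) hgf
  have hdgf : EqOn (deriv g) (deriv f) (Ioo (-R) R) :=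
    fun x hx => deriv_eqOn_open hIopen hgf hx
  have hgR : g R = L := by
    rw [hgdef]
    simp only [mem_Ioo, lt_irrefl, and_false, if_false]
    rw [abs_of_pos hR, hhR]
  have hgh : EqOn g h (Ioo R (R + ε)) := by
    intro x hx
    rw [hgdef]
    simp only [mem_Ioo]
    rw [if_neg (by push_neg; intro _; linarith [hx.1]), abs_of_pos (by linarith [hx.1] : (0:ℝ) < x)]
  have hsRopen : IsOpen (Ioo R (R + ε)) := isOpen_Ioo
  have hdgw : EqOn (deriv g) w (Ioo R (R + ε)) := by
    intro t ht
    rw [deriv_eqOn_open hsRopen hgh ht]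
    exact (hhd t ⟨by linarith [ht.1], ht.2⟩).deriv
  have geven : ∀ x, g (-x) = g x := by
    intro x
    by_cases hx : x ∈ Ioo (-R) R
    · have hx' : -x ∈ Ioo (-R) R := ⟨by linarith [hx.2], by linarith [hx.1]⟩
      rw [hgf hx', hgf hx]
      exact feven x hx
    · have hx' : ¬(-x ∈ Ioo (-R) R) := fun hmem => hx ⟨by linarith [hmem.2], by linarith [hmem.1]⟩
      rw [hgdef]
      simp only [if_neg hx, if_neg hx', abs_neg]
  -- the ODE holds at interior points
  have hmid : ∀ x ∈ Ioo (-R) R, 0 < g x ∧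
      deriv (deriv g) x / (1 + deriv g x ^ 2) = α / g x := by
    intro x hx
    have h1 : deriv g x = deriv f x := hdgf hx
    have h2 : deriv (deriv g) x = deriv (deriv f) x :=
      Filter.EventuallyEq.deriv_eq (eventuallyEq_of_mem (hIopen.mem_nhds hx) hdgf)
    rw [hgf hx, h1, h2]
    exact hcs.2.1 x hx
  -- the ODE holds on [R, R')
  have hget : ∀ x ∈ Ico R R', 0 < g x ∧
      deriv (deriv g) x / (1 + deriv g x ^ 2) = α / g x := by
    intro x hx
    rcases eq_or_lt_of_le hx.1 with hxR | hxR
    · -- the gluing point x = R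
      subst hxR
      have hsLsub : Ioo (0:ℝ) R ⊆ Ioo (-R) R := fun t ht => ⟨by linarith [ht.1], ht.2⟩
      have hsR : Ioo R (R + ε) ∈ 𝓝[>] R := Ioo_mem_nhdsGT_of_mem ⟨le_rfl, by linarith⟩
      have hdgf_evL : deriv g =ᶠ[𝓝[<] R] deriv f := by
        filter_upwards [huIoo] with t ht
        exact hdgf (hsLsub ht)
      have hdgw_evR : deriv g =ᶠ[𝓝[>] R] w := by
        filter_upwards [hsR] with t ht
        exact hdgw ht
      -- first derivative of g at R is V
      have hgVl : HasDerivWithinAt g V (Iic R) R := by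
        apply hasDerivWithinAt_Iic_of_tendsto_deriv (s := Ioo (0:ℝ) R)
        · intro t ht
          exact (((hgf_ev t (hsLsub ht)).differentiableAt_iff).2
            (hcs.hasDerivAt hα0 hz (hsLsub ht)).differentiableAt).differentiableWithinAt
        · show Tendsto g (𝓝[Ioo (0:ℝ) R] R) (𝓝 (g R))
          rw [hgR]
          refine Tendsto.congr' ?_ (hfL.mono_left (nhdsWithin_mono _ (fun t ht => ht.2)))
          filter_upwards [self_mem_nhdsWithin] with t ht
          exact (hgf (hsLsub ht)).symm
        · exact huIoo
        · exact Tendsto.congr' hdgf_evL.symm hvV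
      have hgVr : HasDerivWithinAt g V (Ici R) R := by
        apply hasDerivWithinAt_Ici_of_tendsto_deriv (s := Ioo R (R + ε))
        · intro t ht
          have hev2 : g =ᶠ[𝓝 t] h := eventuallyEq_of_mem (hsRopen.mem_nhds ht) hgh
          exact ((hev2.differentiableAt_iff).2
            (hhd t ⟨by linarith [ht.1], ht.2⟩).differentiableAt).differentiableWithinAt
        · show Tendsto g (𝓝[Ioo R (R + ε)] R) (𝓝 (g R))
          rw [hgR, ← hhR]
          refine Tendsto.congr' ?_ (hhcont.tendsto.mono_left nhdsWithin_le_nhds)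
          filter_upwards [self_mem_nhdsWithin] with t ht
          exact (hgh ht).symm
        · exact hsR
        · refine Tendsto.congr' hdgw_evR.symm ?_
          rw [← hwR]
          exact hwcont.tendsto.mono_left nhdsWithin_le_nhds
      have hgV : HasDerivAt g V R := by
        have := hgVl.union hgVr
        rwa [Iic_union_Ici, hasDerivWithinAt_univ] at this
      have hdgR : deriv g R = V := hgV.deriv
      -- second derivative of g at R
      have hWl : HasDerivWithinAt (deriv g) (α * (1 + V ^ 2) / L) (Iic R) R := by
        apply hasDerivWithinAt_Iic_of_tendsto_deriv (s := Ioo (0:ℝ) R)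
        · intro t ht
          have hev2 : deriv g =ᶠ[𝓝 t] deriv f :=
            eventuallyEq_of_mem (hIopen.mem_nhds (hsLsub ht)) hdgf
          exact ((hev2.differentiableAt_iff).2
            (hcs.diff_deriv hα0 (hsLsub ht))).differentiableWithinAt
        · show Tendsto (deriv g) (𝓝[Ioo (0:ℝ) R] R) (𝓝 (deriv g R))
          rw [hdgR]
          refine Tendsto.congr' ?_ (hvV.mono_left (nhdsWithin_mono _ (fun t ht => ht.2)))
          filter_upwards [self_mem_nhdsWithin] with t ht
          exact (hdgf (hsLsub ht)).symm
        · exact huIoo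
        · have hlim : Tendsto (fun t => α * (1 + (deriv f t) ^ 2) / f t) (𝓝[<] R)
              (𝓝 (α * (1 + V ^ 2) / L)) :=
            Tendsto.div (((hvV.pow 2).const_add 1).const_mul α) hfL (ne_of_gt hL0)
          refine Tendsto.congr' ?_ hlim
          filter_upwards [huIoo] with t ht
          have hev2 : deriv g =ᶠ[𝓝 t] deriv f :=
            eventuallyEq_of_mem (hIopen.mem_nhds (hsLsub ht)) hdgf
          rw [hev2.deriv_eq]
          exact (hcs.deriv2_eq hα0 (hsLsub ht)).symm
      have hWr : HasDerivWithinAt (deriv g) (α * (1 + V ^ 2) / L) (Ici R) R := by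
        apply hasDerivWithinAt_Ici_of_tendsto_deriv (s := Ioo R (R + ε))
        · intro t ht
          have hev2 : deriv g =ᶠ[𝓝 t] w := eventuallyEq_of_mem (hsRopen.mem_nhds ht) hdgw
          exact ((hev2.differentiableAt_iff).2
            (hwd t ⟨by linarith [ht.1], ht.2⟩).differentiableAt).differentiableWithinAt
        · show Tendsto (deriv g) (𝓝[Ioo R (R + ε)] R) (𝓝 (deriv g R))
          rw [hdgR, ← hwR]
          refine Tendsto.congr' ?_ (hwcont.tendsto.mono_left nhdsWithin_le_nhds)
          filter_upwards [self_mem_nhdsWithin] with t ht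
          exact (hdgw ht).symm
        · exact hsR
        · have hwV : Tendsto w (𝓝[>] R) (𝓝 V) := by
            rw [← hwR]
            exact hwcont.tendsto.mono_left nhdsWithin_le_nhds
          have hhL : Tendsto h (𝓝[>] R) (𝓝 L) := by
            rw [← hhR]
            exact hhcont.tendsto.mono_left nhdsWithin_le_nhds
          have hlim : Tendsto (fun t => α * (1 + (w t) ^ 2) / h t) (𝓝[>] R)
              (𝓝 (α * (1 + V ^ 2) / L)) :=
            Tendsto.div (((hwV.pow 2).const_add 1).const_mul α) hhL (ne_of_gt hL0)
          refine Tendsto.congr' ?_ hlim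
          filter_upwards [hsR] with t ht
          have hev2 : deriv g =ᶠ[𝓝 t] w := eventuallyEq_of_mem (hsRopen.mem_nhds ht) hdgw
          rw [hev2.deriv_eq]
          exact ((hwd t ⟨by linarith [ht.1], ht.2⟩).deriv).symm
      have hW : HasDerivAt (deriv g) (α * (1 + V ^ 2) / L) R := by
        have := hWl.union hWr
        rwa [Iic_union_Ici, hasDerivWithinAt_univ] at this
      refine ⟨by rw [hgR]; exact hL0, ?_⟩
      rw [hdgR, hW.deriv, hgR]
      have hV2 : (0:ℝ) < 1 + V ^ 2 := by positivity
      field_simp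
    · -- points strictly to the right of R
      have hxε : x ∈ Ioo R (R + ε) := by
        refine ⟨hxR, ?_⟩
        have := hx.2
        rw [hR'] at this
        linarith
      have hgle : g x = h x := hgh hxε
      have hpos : 0 < h x := by
        apply hδ
        rw [Real.dist_eq, abs_of_pos (by linarith [hxε.1] : (0:ℝ) < x - R)]
        have := hx.2
        rw [hR'] at this
        linarith
      have hd1 : deriv g x = w x := hdgw hxε
      have hd2 : deriv (deriv g) x = deriv w x := deriv_eqOn_open hsRopen hdgw hxε
      have hd3 : deriv w x = α * (1 + w x ^ 2) / h x :=
        (hwd x ⟨by linarith [hxε.1], hxε.2⟩).deriv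
      refine ⟨by rw [hgle]; exact hpos, ?_⟩
      rw [hgle, hd1, hd2, hd3]
      have h1 : (0:ℝ) < 1 + w x ^ 2 := by positivity
      field_simp
  -- the ODE holds on all of the larger interval
  have hall : ∀ x ∈ Ioo (-R') R', 0 < g x ∧
      deriv (deriv g) x / (1 + deriv g x ^ 2) = α / g x := by
    intro x hx
    by_cases hmem : x ∈ Ioo (-R) R
    · exact hmid x hmem
    · have hd1 : ∀ t, deriv g t = -deriv g (-t) := by
        intro t
        have hgneg : (fun s => g (-s)) = g := funext geven
        calc deriv g t = deriv (fun s => g (-s)) t := by rw [hgneg]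
          _ = -deriv g (-t) := deriv_comp_neg g t
      have hd2 : ∀ t, deriv (deriv g) t = deriv (deriv g) (-t) := by
        intro t
        have hx1 : deriv g = fun s => -deriv g (-s) := funext hd1
        calc deriv (deriv g) t = deriv (fun s => -deriv g (-s)) t := by rw [← hx1]
          _ = -(deriv (fun s => deriv g (-s)) t) := deriv.neg
          _ = -(-(deriv (deriv g) (-t))) := by rw [deriv_comp_neg (deriv g) t]
          _ = deriv (deriv g) (-t) := neg_neg _
      rcases le_or_gt R x with hge | hlt
      · exact hget x ⟨hge, hx.2⟩
      · have hxle : x ≤ -R := by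
          by_contra hcon
          push_neg at hcon
          exact hmem ⟨hcon, hlt⟩
        have hnx : -x ∈ Ico R R' := ⟨by linarith, by linarith [hx.1]⟩
        obtain ⟨hp, hode⟩ := hget (-x) hnx
        have hgx : g x = g (-x) := (geven x).symm
        refine ⟨by rw [hgx]; exact hp, ?_⟩
        rw [hgx, hd1 x, hd2 x, neg_sq]
        exact hode
  -- contradiction with maximality
  have hCat : CatSol α z₀ R' g := by
    refine ⟨by rw [hR']; linarith, hall, ?_, ?_⟩
    · rw [hgf hcs.zero_mem, hcs.2.2.1]
    · rw [hdgf hcs.zero_mem, hcs.2.2.2]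
  exact hmax R' g (by rw [hR']; linarith) hCat hgf

end Blowup


/-- For `α > 1`, the maximal solution of the `α`-catenary ODE with
`f(0) = z₀ > 0`, `f'(0) = 0` blows up at a finite half-width `R`: there is no
global solution on all of `ℝ` (so `R < ∞`), `f(x) → ∞` as `x → R⁻`, the
rescaling `x ↦ λ f(x/λ)` is the maximal solution with initial height `λz₀` and
half-width `λR` (the scaling law `R(λz₀) = λR(z₀)`), so every maximal solution
with initial height `z₀'` has half-width `(z₀'/z₀)R`; in particular the
half-width tends to `0` as `z₀' → 0⁺` and to `∞` as `z₀' → ∞`. -/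
theorem stmt_19 (α z₀ R : ℝ) (hα : 1 < α) (hz : 0 < z₀)
    (f : ℝ → ℝ) (hf : MaximalCatSol α z₀ R f) :
    (∀ g : ℝ → ℝ, ¬ ((∀ x : ℝ, 0 < g x ∧
        deriv (deriv g) x / (1 + (deriv g x) ^ 2) = α / g x) ∧
        g 0 = z₀ ∧ deriv g 0 = 0)) ∧
    Filter.Tendsto f (nhdsWithin R (Set.Iio R)) Filter.atTop ∧
    (∀ lam : ℝ, 0 < lam →
      MaximalCatSol α (lam * z₀) (lam * R) (fun x => lam * f (x / lam))) ∧
    (∀ (z₀' R' : ℝ) (f' : ℝ → ℝ), 0 < z₀' → MaximalCatSol α z₀' R' f' →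
      R' = (z₀' / z₀) * R) ∧
    Filter.Tendsto (fun z₀' : ℝ => (z₀' / z₀) * R)
      (nhdsWithin 0 (Set.Ioi 0)) (nhds 0) ∧
    Filter.Tendsto (fun z₀' : ℝ => (z₀' / z₀) * R) Filter.atTop Filter.atTop := by
  have hα0 : 0 < α := lt_trans one_pos hα
  have hR : 0 < R := hf.1.1
  refine ⟨?_, hf.blowup hα hz, fun lam hlam => hf.scale hlam, ?_, ?_, ?_⟩
  · -- no global solution
    intro g hg
    have hgc : CatSol α z₀ (R + 1) g :=
      ⟨by linarith, fun x _ => hg.1 x, hg.2.1, hg.2.2⟩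
    apply hf.2 (R + 1) g (lt_add_one R) hgc
    intro x hx
    exact CatSol.val_eq hα0 hz hf.1 hgc hx
      ⟨by linarith [hx.1], by linarith [hx.2]⟩
  · -- scaling law for the half-width
    intro z₀' R' f' hz' hf'
    set lam := z₀ / z₀' with hlam
    have hlam0 : 0 < lam := div_pos hz hz'
    have hF := hf'.scale hlam0
    rw [show lam * z₀' = z₀ by rw [hlam]; field_simp] at hF
    have hkey : lam * R' = R := by
      by_contra hne
      rcases lt_or_gt_of_ne hne with h | h
      · apply hF.2 R f h hf.1
        intro x hx
        exact CatSol.val_eq hα0 hz hF.1 hf.1 hx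
          ⟨by linarith [hx.1, hF.1.1, h], by linarith [hx.2, h]⟩
      · apply hf.2 (lam * R') _ h hF.1
        intro x hx
        exact CatSol.val_eq hα0 hz hf.1 hF.1 hx
          ⟨by linarith [hx.1, hR, h], by linarith [hx.2, h]⟩
    rw [hlam] at hkey
    field_simp at hkey ⊢
    linarith [hkey]
  · -- half-width tends to 0
    have h : Tendsto (fun z : ℝ => z / z₀ * R) (𝓝 0) (𝓝 (0 / z₀ * R)) :=
      (((continuous_id.div_const z₀).mul continuous_const)).tendsto 0
    rw [zero_div, zero_mul] at h
    exact h.mono_left nhdsWithin_le_nhds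
  · -- half-width tends to ∞
    have h := tendsto_id.atTop_mul_const (div_pos hR hz)
    have he : (fun z : ℝ => id z * (R / z₀)) = fun z : ℝ => z / z₀ * R := by
      funext z; unfold id; field_simp
    rwa [he] at h
end
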